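/- arXiv:2210.05237 — 3 statements merged into one kernel-verified Lean document; each statement's English description precedes it below -/
import Mathlib

section
/- With m = 2 resources, for every n and every rational α ∈ (0, 1/2], the fair approximation ratio for social welfare of the DRF mechanism over instances with minority ratio α equals 2 − α. Precisely: (i) for every instance with minority ratio α, every feasible allocation satisfying SI and EF has social welfare at most (2 − α) times the social welfare of the DRF allocation; and (ii) for every ε > 0 there exists an instance with minority ratio α and a feasible allocation satisfying SI and EF whose social welfare is at least (2 − α − ε) times the social welfare of the DRF allocation. -/
open Finset
open scoped Classical

/-- A valid instance: all demands lie in `(0,1]` and every agent has a resource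
with normalized demand `1` (its dominant resource). -/
def ValidInstance {n m : ℕ} (d : Fin n → Fin m → ℝ) : Prop :=
  (∀ i r, 0 < d i r ∧ d i r ≤ 1) ∧ ∀ i, ∃ r, d i r = 1

/-- Entrywise nonnegative allocation. -/
def NonnegAlloc {n m : ℕ} (A : Fin n → Fin m → ℝ) : Prop := ∀ i r, 0 ≤ A i r

/-- A feasible allocation: nonnegative and no resource over-allocated. -/
def Feasible {n m : ℕ} (A : Fin n → Fin m → ℝ) : Prop :=
  NonnegAlloc A ∧ ∀ r, ∑ i, A i r ≤ 1

/-- Leontief utility of a bundle `Av` for demand vector `dv`: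
the largest `y ≥ 0` with `y * dv r ≤ Av r` for all `r`. -/
noncomputable def util {m : ℕ} (dv Av : Fin m → ℝ) : ℝ :=
  sSup {y : ℝ | 0 ≤ y ∧ ∀ r, y * dv r ≤ Av r}

/-- Share incentive: every agent gets utility at least `1/n`. -/
def SI {n m : ℕ} (d A : Fin n → Fin m → ℝ) : Prop :=
  ∀ i, (1 : ℝ) / n ≤ util (d i) (A i)

/-- Envy-freeness: no agent prefers another agent's bundle. -/
def EF {n m : ℕ} (d A : Fin n → Fin m → ℝ) : Prop :=
  ∀ i j, util (d i) (A j) ≤ util (d i) (A i)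

/-- Social welfare: the sum of all utilities. -/
noncomputable def SW {n m : ℕ} (d A : Fin n → Fin m → ℝ) : ℝ :=
  ∑ i, util (d i) (A i)

/-- Utilization: the minimum over resources of the total allocated amount. -/
noncomputable def Util {n m : ℕ} (A : Fin n → Fin m → ℝ) : ℝ :=
  ⨅ r : Fin m, ∑ i, A i r

/-- Pareto optimality of an allocation. -/
def PO {n m : ℕ} (d A : Fin n → Fin m → ℝ) : Prop :=
  ¬ ∃ A' : Fin n → Fin m → ℝ, Feasible A' ∧
      (∀ i, util (d i) (A i) ≤ util (d i) (A' i)) ∧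
      ∃ i, util (d i) (A i) < util (d i) (A' i)

/-- Agents whose dominant resource is resource 1 (index `0`). -/
noncomputable def G1 {n m : ℕ} [NeZero m] (d : Fin n → Fin m → ℝ) : Finset (Fin n) :=
  Finset.univ.filter (fun i => d i 0 = 1)

/-- Agents whose demand for resource 1 (index `0`) is below `1`. -/
noncomputable def G2 {n m : ℕ} [NeZero m] (d : Fin n → Fin m → ℝ) : Finset (Fin n) :=
  Finset.univ.filter (fun i => d i 0 < 1)

/-- Minority ratio `α = |G2| / n` for two resources. -/
def MinorityRatio {n : ℕ} (d : Fin n → Fin 2 → ℝ) (α : ℚ) : Prop :=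
  ((G2 d).card : ℚ) = α * n

/-- The DRF allocation: every agent gets `x* • d i` with
`x* = 1 / max_r Σ_j d j r`. -/
noncomputable def DRF {n m : ℕ} (d : Fin n → Fin m → ℝ) : Fin n → Fin m → ℝ :=
  fun i r => (1 / ⨆ r' : Fin m, ∑ j, d j r') * d i r

/-- The F1 allocation at water level `t`: agents in `G1` get dominant share `1/n`;
an agent `i` with `d i 0 < 1` gets `max (d i 0 / n) t` of resource 1, i.e. has
scale factor `max (1/n) (t / d i 0)`. -/
noncomputable def F1At {n m : ℕ} [NeZero m] (d : Fin n → Fin m → ℝ) (t : ℝ) :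
    Fin n → Fin m → ℝ :=
  fun i r => (if d i 0 = 1 then (1 : ℝ) / n else max ((1 : ℝ) / n) (t / d i 0)) * d i r

/-- The F1 allocation: F1 at the largest feasible water level. -/
noncomputable def F1 {n m : ℕ} [NeZero m] (d : Fin n → Fin m → ℝ) : Fin n → Fin m → ℝ :=
  F1At d (sSup {t : ℝ | 0 ≤ t ∧ Feasible (F1At d t)})

set_option maxHeartbeats 2000000
lemma iSup_fin2 (f : Fin 2 → ℝ) : (⨆ r, f r) = max (f 0) (f 1) := by
  apply le_antisymm
  · apply ciSup_le
    intro r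
    fin_cases r
    · exact le_max_left _ _
    · exact le_max_right _ _
  · apply max_le
    · exact le_ciSup (Set.Finite.bddAbove (Set.finite_range f)) 0
    · exact le_ciSup (Set.Finite.bddAbove (Set.finite_range f)) 1

lemma util_eq_min (dv Av : Fin 2 → ℝ) (hd0 : 0 < dv 0) (hd1 : 0 < dv 1)
    (hA0 : 0 ≤ Av 0) (hA1 : 0 ≤ Av 1) :
    util dv Av = min (Av 0 / dv 0) (Av 1 / dv 1) := by
  have hm : (0:ℝ) ≤ min (Av 0 / dv 0) (Av 1 / dv 1) :=
    le_min (div_nonneg hA0 hd0.le) (div_nonneg hA1 hd1.le)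
  have hset : {y : ℝ | 0 ≤ y ∧ ∀ r, y * dv r ≤ Av r}
      = Set.Icc 0 (min (Av 0 / dv 0) (Av 1 / dv 1)) := by
    ext y
    simp only [Set.mem_setOf_eq, Set.mem_Icc, Fin.forall_fin_two, le_min_iff]
    constructor
    · rintro ⟨hy, h0', h1'⟩
      exact ⟨hy, (le_div_iff₀ hd0).2 h0', (le_div_iff₀ hd1).2 h1'⟩
    · rintro ⟨hy, h0', h1'⟩
      exact ⟨hy, (le_div_iff₀ hd0).1 h0', (le_div_iff₀ hd1).1 h1'⟩
  rw [util, hset, csSup_Icc hm]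

lemma util_smul (dv : Fin 2 → ℝ) (hd0 : 0 < dv 0) (hd1 : 0 < dv 1) (c : ℝ) (hc : 0 ≤ c) :
    util dv (fun r => c * dv r) = c := by
  rw [util_eq_min dv _ hd0 hd1 (by positivity) (by positivity)]
  rw [mul_div_assoc, mul_div_assoc, div_self hd0.ne', div_self hd1.ne', mul_one, min_self]

lemma card_filter_lt (n k : ℕ) (hk : k < n) :
    ((univ : Finset (Fin n)).filter (fun i : Fin n => (i:ℕ) < k)).card = k := by
  have : (univ : Finset (Fin n)).filter (fun i : Fin n => (i:ℕ) < k) = Finset.Iio ⟨k, hk⟩ := by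
    ext i
    simp [Finset.mem_Iio, Fin.lt_def]
  rw [this, Fin.card_Iio]

lemma sw_drf {n : ℕ} (d : Fin n → Fin 2 → ℝ) (hn : 0 < n) (hd : ValidInstance d) :
    SW d (DRF d) = (n : ℝ) / max (∑ j, d j 0) (∑ j, d j 1) := by
  have hs0 : (0:ℝ) < ∑ j, d j 0 :=
    Finset.sum_pos (fun j _ => (hd.1 j 0).1) (univ_nonempty_iff.2 (Fin.pos_iff_nonempty.1 hn))
  have hM : (0:ℝ) < max (∑ j, d j 0) (∑ j, d j 1) := lt_of_lt_of_le hs0 (le_max_left _ _)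
  have hsup : (⨆ r' : Fin 2, ∑ j, d j r') = max (∑ j, d j 0) (∑ j, d j 1) :=
    iSup_fin2 _
  have hutil : ∀ i, util (d i) (DRF d i) = 1 / max (∑ j, d j 0) (∑ j, d j 1) := by
    intro i
    have : DRF d i = fun r => (1 / max (∑ j, d j 0) (∑ j, d j 1)) * d i r := by
      funext r; simp [DRF, hsup]
    rw [this, util_smul (d i) (hd.1 i 0).1 (hd.1 i 1).1 _ (by positivity)]
  rw [SW]
  simp only [hutil, Finset.sum_const, card_univ, Fintype.card_fin, nsmul_eq_mul]
  ring

lemma arith1 (N K C D u v : ℝ) (hN0 : 0 < N)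
    (hNu : N*u + C ≤ N) (hNv : N*v + D ≤ N)
    (hC0 : 0 ≤ C) (hCK : C ≤ K) (hD0 : 0 ≤ D) (hDK : D ≤ N - K)
    (hK0 : 0 ≤ K) (h2K : 2*K ≤ N) :
    (v + u) * max ((N-K)+C) (K+D) ≤ 2*N - K := by
  rcases le_total (K + D) ((N - K) + C) with hmax | hmax
  · rw [max_eq_left hmax]
    nlinarith [mul_nonneg (show (0:ℝ) ≤ 2*N - C - D - N*u - N*v by linarith)
        (show (0:ℝ) ≤ N - K + C by linarith),
      mul_nonneg (show (0:ℝ) ≤ N - C by linarith) (show (0:ℝ) ≤ K - C by linarith),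
      mul_nonneg hD0 (show (0:ℝ) ≤ N + C - K by linarith)]
  · rw [max_eq_right hmax]
    nlinarith [mul_nonneg (show (0:ℝ) ≤ 2*N - C - D - N*u - N*v by linarith)
        (show (0:ℝ) ≤ K + D by linarith),
      mul_nonneg (show (0:ℝ) ≤ N - K - D by linarith) (show (0:ℝ) ≤ N - D by linarith),
      mul_nonneg hN0.le (show (0:ℝ) ≤ N - 2*K by linarith),
      mul_nonneg hC0 (show (0:ℝ) ≤ K + D by linarith)]

lemma part1 (α : ℚ) (hα : α ≤ 1 / 2)
    (n : ℕ) (d : Fin n → Fin 2 → ℝ) (hn : 0 < n) (hd : ValidInstance d)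
    (hmr : MinorityRatio d α) (A : Fin n → Fin 2 → ℝ) (hF : Feasible A) (hSI : SI d A) :
    SW d A ≤ ((2 : ℝ) - (α : ℝ)) * SW d (DRF d) := by
  have hdrf := sw_drf d hn hd
  obtain ⟨hdpos, hddom⟩ := hd
  set N : ℝ := (n : ℝ) with hNdef
  have hN0 : (0:ℝ) < N := by rw [hNdef]; exact_mod_cast hn
  set y : Fin n → ℝ := fun i => util (d i) (A i) with hy
  have hymin : ∀ i, y i = min (A i 0 / d i 0) (A i 1 / d i 1) := fun i =>
    util_eq_min (d i) (A i) (hdpos i 0).1 (hdpos i 1).1 (hF.1 i 0) (hF.1 i 1)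
  have hyd : ∀ i r, y i * d i r ≤ A i r := by
    intro i r
    have h0 := (hdpos i r).1
    rw [← le_div_iff₀ h0]
    fin_cases r
    · exact (hymin i) ▸ min_le_left _ _
    · exact (hymin i) ▸ min_le_right _ _
  have hySI : ∀ i, 1 / N ≤ y i := fun i => hSI i
  have hy0 : ∀ i, 0 ≤ y i := fun i => le_trans (by positivity) (hySI i)
  set T2 : Finset (Fin n) := univ.filter (fun i => d i 0 < 1) with hT2
  set T1 : Finset (Fin n) := univ.filter (fun i => ¬ d i 0 < 1) with hT1
  have hmemT1 : ∀ i ∈ T1, d i 0 = 1 := by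
    intro i hi
    rw [hT1, mem_filter] at hi
    exact le_antisymm (hdpos i 0).2 (not_lt.1 hi.2)
  have hmemT2 : ∀ i ∈ T2, d i 1 = 1 := by
    intro i hi
    rw [hT2, mem_filter] at hi
    rcases hddom i with ⟨r, hr⟩
    fin_cases r
    · exact absurd hr (ne_of_lt hi.2)
    · exact hr
  have hsplit : ∀ f : Fin n → ℝ, ∑ i, f i = ∑ i ∈ T2, f i + ∑ i ∈ T1, f i := by
    intro f
    rw [hT1, hT2, Finset.sum_filter_add_sum_filter_not]
  set u : ℝ := ∑ i ∈ T1, y i with hu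
  set v : ℝ := ∑ i ∈ T2, y i with hv
  set C : ℝ := ∑ i ∈ T2, d i 0 with hC
  set D : ℝ := ∑ i ∈ T1, d i 1 with hD
  set K : ℝ := (T2.card : ℝ) with hK
  have hKα : K = (α:ℝ) * N := by
    rw [hK, hNdef]
    exact_mod_cast congrArg (fun x : ℚ => (x : ℝ)) hmr
  have hcardn : T2.card + T1.card = n := by
    have h := Finset.card_filter_add_card_filter_not (s := (univ : Finset (Fin n)))
      (p := fun i : Fin n => d i 0 < 1)
    rw [card_univ, Fintype.card_fin] at h
    exact h
  have hcard : (T1.card : ℝ) = N - K := by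
    have := congrArg (Nat.cast : ℕ → ℝ) hcardn
    push_cast at this
    rw [hK, hNdef]; linarith
  clear_value y T1 T2 u v C D K N
  -- resource totals
  have hs0 : ∑ j, d j 0 = (N - K) + C := by
    rw [hsplit (fun j => d j 0), ← hC, Finset.sum_congr rfl hmemT1,
      Finset.sum_const, nsmul_eq_mul, mul_one, hcard]
    ring
  have hs1 : ∑ j, d j 1 = K + D := by
    rw [hsplit (fun j => d j 1), ← hD, Finset.sum_congr rfl hmemT2,
      Finset.sum_const, nsmul_eq_mul, mul_one, ← hK]
  -- feasibility constraints
  have hres : ∀ r, ∑ i ∈ T2, y i * d i r + ∑ i ∈ T1, y i * d i r ≤ 1 := by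
    intro r
    rw [← hsplit (fun i => y i * d i r)]
    exact le_trans (Finset.sum_le_sum (fun i _ => hyd i r)) (hF.2 r)
  have hres0 : ∑ i ∈ T2, y i * d i 0 + u ≤ 1 := by
    have := hres 0
    rwa [show ∑ i ∈ T1, y i * d i 0 = u by
      rw [hu]; exact Finset.sum_congr rfl (fun i hi => by rw [hmemT1 i hi, mul_one])] at this
  have hres1 : v + ∑ i ∈ T1, y i * d i 1 ≤ 1 := by
    have := hres 1
    rwa [show ∑ i ∈ T2, y i * d i 1 = v by
      rw [hv]; exact Finset.sum_congr rfl (fun i hi => by rw [hmemT2 i hi, mul_one])] at this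
  -- SI lower bounds on used amounts
  have hw0 : C ≤ N * ∑ i ∈ T2, y i * d i 0 := by
    rw [Finset.mul_sum, hC]
    refine Finset.sum_le_sum (fun i _ => ?_)
    have h1 : 1 ≤ N * y i := by
      have := hySI i
      rw [div_le_iff₀ hN0] at this
      linarith
    have := mul_le_mul_of_nonneg_right h1 (hdpos i 0).1.le
    rw [one_mul] at this
    linarith [this, mul_assoc N (y i) (d i 0)]
  have hw1 : D ≤ N * ∑ i ∈ T1, y i * d i 1 := by
    rw [Finset.mul_sum, hD]
    refine Finset.sum_le_sum (fun i _ => ?_)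
    have h1 : 1 ≤ N * y i := by
      have := hySI i
      rw [div_le_iff₀ hN0] at this
      linarith
    have := mul_le_mul_of_nonneg_right h1 (hdpos i 1).1.le
    rw [one_mul] at this
    linarith [this, mul_assoc N (y i) (d i 1)]
  have hNu : N * u + C ≤ N := by
    nlinarith [mul_le_mul_of_nonneg_left hres0 hN0.le]
  have hNv : N * v + D ≤ N := by
    nlinarith [mul_le_mul_of_nonneg_left hres1 hN0.le]
  -- crude bounds
  have hC0 : 0 ≤ C := by rw [hC]; exact Finset.sum_nonneg (fun i _ => (hdpos i 0).1.le)
  have hCK : C ≤ K := by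
    rw [hC, hK]
    calc ∑ i ∈ T2, d i 0 ≤ ∑ i ∈ T2, 1 := Finset.sum_le_sum (fun i _ => (hdpos i 0).2)
    _ = (T2.card : ℝ) := by simp
  have hD0 : 0 ≤ D := by rw [hD]; exact Finset.sum_nonneg (fun i _ => (hdpos i 1).1.le)
  have hDK : D ≤ N - K := by
    rw [hD]
    calc ∑ i ∈ T1, d i 1 ≤ ∑ i ∈ T1, 1 := Finset.sum_le_sum (fun i _ => (hdpos i 1).2)
    _ = (T1.card : ℝ) := by simp
    _ = N - K := hcard
  have hK0 : 0 ≤ K := by rw [hK]; positivity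
  have h2K : 2 * K ≤ N := by
    have hh : (α:ℝ) ≤ ((1/2 : ℚ) : ℝ) := Rat.cast_le.mpr hα
    norm_num at hh
    nlinarith [hKα]
  have hu0 : 0 ≤ u := by rw [hu]; exact Finset.sum_nonneg (fun i _ => hy0 i)
  have hv0 : 0 ≤ v := by rw [hv]; exact Finset.sum_nonneg (fun i _ => hy0 i)
  -- assemble
  have hSWA : SW d A = v + u := by rw [SW, ← hy, hv, hu]; exact hsplit y
  rw [hSWA, hdrf, hs0, hs1]
  have hM : (0:ℝ) < max ((N-K)+C) (K+D) :=
    lt_of_lt_of_le (show (0:ℝ) < (N-K)+C by linarith) (le_max_left _ _)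
  have heq : (2 - (α:ℝ)) * (N / max ((N-K)+C) (K+D))
      = (2*N - K) / max ((N-K)+C) (K+D) := by
    rw [hKα]; ring
  rw [heq, le_div_iff₀ hM]
  exact arith1 N K C D u v hN0 hNu hNv hC0 hCK hD0 hDK hK0 h2K

lemma arith2 (e N K c0 : ℝ) (he0 : 0 < e) (he : e ≤ 1/2) (heN : 16 ≤ e*N)
    (hK1 : 1 ≤ K) (h2K : 2*K ≤ N) (hc00 : 0 ≤ c0) :
    (2*N - K - e*N) * N ≤ (N + (N-K)*(1-e/8)) * (c0 + (K-1)*(1-e/8) + (N-K)) := by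
  have hN : 32 ≤ N := by nlinarith
  nlinarith [mul_nonneg (mul_nonneg he0.le (sub_nonneg.2 h2K)) (show (0:ℝ) ≤ N - K by linarith),
    mul_nonneg (sub_nonneg.2 heN) (show (0:ℝ) ≤ N - K by linarith),
    mul_nonneg (sub_nonneg.2 heN) (show (0:ℝ) ≤ K - 1 by linarith),
    mul_nonneg (mul_nonneg he0.le he0.le) (mul_nonneg (show (0:ℝ) ≤ N - K by linarith) (show (0:ℝ) ≤ K - 1 by linarith)),
    mul_nonneg hc00 (show (0:ℝ) ≤ N + (N-K)*(1-e/8) by nlinarith),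
    mul_nonneg (mul_nonneg he0.le he0.le) (mul_nonneg (show (0:ℝ) ≤ N - K by linarith) (show (0:ℝ) ≤ N - K by linarith)),
    sq_nonneg (e*N), sq_nonneg (N-K), sq_nonneg K, he0.le, hN]

lemma sum_split {n k : ℕ} (hk1 : 1 ≤ k) (hkn : k < n) (f : Fin n → ℝ) (a x z : ℝ)
    (h0 : f ⟨0, lt_trans (lt_of_lt_of_le Nat.zero_lt_one hk1) hkn⟩ = a)
    (hx : ∀ i : Fin n, (i:ℕ) ≠ 0 → (i:ℕ) < k → f i = x)
    (hz : ∀ i : Fin n, ¬ (i:ℕ) < k → f i = z) :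
    ∑ i, f i = a + ((k:ℝ) - 1) * x + ((n:ℝ) - (k:ℝ)) * z := by
  have hn0 : 0 < n := lt_trans (lt_of_lt_of_le Nat.zero_lt_one hk1) hkn
  set i0 : Fin n := ⟨0, hn0⟩ with hi0
  set s : Finset (Fin n) := univ.filter (fun i : Fin n => (i:ℕ) < k) with hs
  have hcs : s.card = k := card_filter_lt n k hkn
  have hmem : i0 ∈ s := by
    rw [hs, mem_filter]
    exact ⟨mem_univ _, lt_of_lt_of_le Nat.zero_lt_one hk1⟩
  have h1 : ∑ i ∈ s, f i = a + ((k:ℝ) - 1) * x := by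
    rw [← Finset.add_sum_erase s f hmem, h0]
    congr 1
    have : ∀ i ∈ s.erase i0, f i = x := by
      intro i hi
      rw [Finset.mem_erase] at hi
      have hiv : (i:ℕ) ≠ 0 := fun hv => hi.1 (Fin.ext hv)
      have : (i:ℕ) < k := by
        have := hi.2; rw [hs, mem_filter] at this; exact this.2
      exact hx i hiv this
    rw [Finset.sum_congr rfl this, Finset.sum_const, Finset.card_erase_of_mem hmem, hcs,
      nsmul_eq_mul]
    congr 1
    rw [Nat.cast_sub hk1, Nat.cast_one]
  have h2 : ∑ i ∈ univ.filter (fun i : Fin n => ¬ (i:ℕ) < k), f i = ((n:ℝ) - (k:ℝ)) * z := by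
    rw [Finset.sum_congr rfl (fun i hi => hz i (by rw [mem_filter] at hi; exact hi.2)),
      Finset.sum_const, nsmul_eq_mul]
    have hc2 : (univ.filter (fun i : Fin n => ¬ (i:ℕ) < k)).card = n - k := by
      have h := Finset.card_filter_add_card_filter_not
        (s := (univ : Finset (Fin n))) (p := fun i : Fin n => (i:ℕ) < k)
      rw [card_univ, Fintype.card_fin, ← hs, hcs] at h
      omega
    rw [hc2]
    congr 1
    rw [Nat.cast_sub hkn.le]
  rw [← Finset.sum_filter_add_sum_filter_not univ (fun i : Fin n => (i:ℕ) < k) f, ← hs, h1, h2]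

lemma part2 (α : ℚ) (hα0 : 0 < α) (hα : α ≤ 1 / 2) (ε : ℝ) (hε : 0 < ε) :
    ∃ (n : ℕ) (d : Fin n → Fin 2 → ℝ), 0 < n ∧
      ValidInstance d ∧ MinorityRatio d α ∧
      ∃ A : Fin n → Fin 2 → ℝ, Feasible A ∧ SI d A ∧ EF d A ∧
        ((2 : ℝ) - (α : ℝ) - ε) * SW d (DRF d) ≤ SW d A := by
  -- parameters
  set e : ℝ := min ε (1/2) with hedef
  have he0 : 0 < e := lt_min hε (by norm_num)
  have hee : e ≤ ε := min_le_left _ _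
  have he2 : e ≤ 1/2 := min_le_right _ _
  set p : ℕ := α.num.toNat with hpdef
  set q : ℕ := α.den with hqdef
  have hq0 : 0 < q := α.pos
  have hnum : (0:ℤ) < α.num := Rat.num_pos.2 hα0
  have hp0 : 0 < p := by rw [hpdef]; omega
  have hpnum : (p : ℤ) = α.num := Int.toNat_of_nonneg hnum.le
  have hαpq : (α : ℚ) = (p:ℚ) / (q:ℚ) := by
    rw [← Rat.num_div_den α]
    congr 1
    · exact_mod_cast hpnum.symm
  have h2pq : 2 * p ≤ q := by
    have h : (p:ℚ) / (q:ℚ) ≤ 1/2 := hαpq ▸ hα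
    rw [div_le_div_iff₀ (by exact_mod_cast hq0) (by norm_num)] at h
    exact_mod_cast (by linarith : (2:ℚ) * p ≤ q)
  set t : ℕ := max 1 ⌈(16:ℝ)/e⌉₊ with htdef
  have ht1 : 1 ≤ t := le_max_left _ _
  set n : ℕ := q * t with hndef
  set k : ℕ := p * t with hkdef
  have hk1 : 1 ≤ k := Nat.one_le_iff_ne_zero.2 (by positivity)
  have h2kn : 2 * k ≤ n := by
    rw [hndef, hkdef]
    calc 2 * (p * t) = (2*p) * t := by ring
    _ ≤ q * t := Nat.mul_le_mul_right t h2pq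
  have hkn : k < n := by omega
  have hn0 : 0 < n := by omega
  set N : ℝ := (n : ℝ) with hNdef
  have hN0 : (0:ℝ) < N := by rw [hNdef]; exact_mod_cast hn0
  set K : ℝ := (k : ℝ) with hKdef
  have hK1 : (1:ℝ) ≤ K := by rw [hKdef]; exact_mod_cast hk1
  have h2K : 2*K ≤ N := by rw [hKdef, hNdef]; exact_mod_cast h2kn
  have hkq : ((k:ℚ)) = α * n := by
    rw [hkdef, hndef, hαpq]
    push_cast
    field_simp
  have hαK : (α:ℝ) * N = K := by
    have := congrArg (fun x : ℚ => (x:ℝ)) hkq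
    push_cast at this
    rw [hKdef, hNdef]
    exact this.symm
  have heN : 16 ≤ e * N := by
    have h1 : (16:ℝ)/e ≤ (⌈(16:ℝ)/e⌉₊ : ℝ) := Nat.le_ceil _
    have h2 : (⌈(16:ℝ)/e⌉₊ : ℝ) ≤ (t : ℝ) := by exact_mod_cast le_max_right 1 ⌈(16:ℝ)/e⌉₊
    have h3 : (t:ℝ) ≤ N := by
      rw [hNdef, hndef]
      exact_mod_cast Nat.le_mul_of_pos_left t hq0
    have : (16:ℝ)/e ≤ N := by linarith
    rw [div_le_iff₀ he0] at this
    linarith [this]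
  -- construction
  set b : ℝ := e/8 with hbdef
  have hb0 : 0 < b := by positivity
  have hb1 : b ≤ 1 := by rw [hbdef]; linarith
  set c : ℝ := 1 - e/8 with hcdef
  have hc0' : 0 < c := by rw [hcdef]; linarith
  have hc1 : c < 1 := by rw [hcdef]; linarith
  set Y : ℝ := 1 - (K-1)/N - (N-K)*b/N with hYdef
  have hYalt : Y = 1/N + (N-K)*(1-b)/N := by rw [hYdef]; field_simp; ring
  have hYN : 1/N ≤ Y := by
    rw [hYalt]
    have : 0 ≤ (N-K)*(1-b)/N := by
      apply div_nonneg _ hN0.le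
      apply mul_nonneg <;> linarith
    linarith
  have hY0 : 0 < Y := lt_of_lt_of_le (by positivity) hYN
  have hY1 : Y ≤ 1 := by
    rw [hYdef]
    have h1 : 0 ≤ (K-1)/N := div_nonneg (by linarith) hN0.le
    have h2 : 0 ≤ (N-K)*b/N := div_nonneg (mul_nonneg (by linarith) hb0.le) hN0.le
    linarith
  have hNY1 : 1 ≤ N * Y := by
    have := mul_le_mul_of_nonneg_left hYN hN0.le
    rwa [mul_one_div, div_self hN0.ne'] at this
  set c0 : ℝ := c / (N * Y) with hc0def
  have hc00 : 0 < c0 := by rw [hc0def]; positivity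
  have hYc0 : Y * c0 = c / N := by
    rw [hc0def]
    field_simp
  have hc0le : c0 ≤ c := by
    rw [hc0def, div_le_iff₀ (by positivity)]
    nlinarith
  have hc01 : c0 < 1 := lt_of_le_of_lt hc0le hc1
  clear_value e p q t n k N K b c Y c0
  -- the instance
  set d : Fin n → Fin 2 → ℝ := fun i r =>
    if (i:ℕ) = 0 then (if r = 0 then c0 else 1)
    else if (i:ℕ) < k then (if r = 0 then c else 1)
    else (if r = 0 then 1 else b) with hddef
  set w : Fin n → ℝ := fun i => if (i:ℕ) = 0 then Y else 1/N with hwdef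
  set A : Fin n → Fin 2 → ℝ := fun i r => w i * d i r with hAdef
  have haval : ∀ (i : Fin n) (r : Fin 2), A i r = w i * d i r := fun _ _ => rfl
  have hweval : ∀ i : Fin n, w i = if (i:ℕ) = 0 then Y else 1/N := fun _ => rfl
  have hne0 : ∀ i : Fin n, ¬ (i:ℕ) < k → (i:ℕ) ≠ 0 := by intro i h; omega
  have hd0v : ∀ i : Fin n, (i:ℕ) = 0 → d i 0 = c0 ∧ d i 1 = 1 := by
    intro i h; constructor <;> simp [hddef, h]
  have hdkv : ∀ i : Fin n, (i:ℕ) ≠ 0 → (i:ℕ) < k → d i 0 = c ∧ d i 1 = 1 := by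
    intro i h h'; constructor <;> simp [hddef, h, h']
  have hdgv : ∀ i : Fin n, ¬ (i:ℕ) < k → d i 0 = 1 ∧ d i 1 = b := by
    intro i h
    have h0 : (i:ℕ) ≠ 0 := hne0 i h
    constructor <;> simp [hddef, h, h0]
  have hdpos0 : ∀ i : Fin n, 0 < d i 0 ∧ d i 0 ≤ 1 := by
    intro i
    by_cases h0 : (i:ℕ) = 0
    · rw [(hd0v i h0).1]; exact ⟨hc00, hc01.le⟩
    · by_cases hk' : (i:ℕ) < k
      · rw [(hdkv i h0 hk').1]; exact ⟨hc0', hc1.le⟩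
      · rw [(hdgv i hk').1]; norm_num
  have hdpos1 : ∀ i : Fin n, 0 < d i 1 ∧ d i 1 ≤ 1 := by
    intro i
    by_cases h0 : (i:ℕ) = 0
    · rw [(hd0v i h0).2]; norm_num
    · by_cases hk' : (i:ℕ) < k
      · rw [(hdkv i h0 hk').2]; norm_num
      · rw [(hdgv i hk').2]; exact ⟨hb0, hb1⟩
  have hdpos : ∀ (i : Fin n) (r : Fin 2), 0 < d i r ∧ d i r ≤ 1 := by
    intro i r
    fin_cases r
    · exact hdpos0 i
    · exact hdpos1 i
  have hvalid : ValidInstance d := by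
    refine ⟨hdpos, fun i => ?_⟩
    by_cases h0 : (i:ℕ) = 0
    · exact ⟨1, (hd0v i h0).2⟩
    · by_cases hk' : (i:ℕ) < k
      · exact ⟨1, (hdkv i h0 hk').2⟩
      · exact ⟨0, (hdgv i hk').1⟩
  have hwpos : ∀ i, 1/N ≤ w i := by
    intro i
    rw [hweval]
    by_cases h0 : (i:ℕ) = 0
    · rw [if_pos h0]; exact hYN
    · rw [if_neg h0]
  have hw0 : ∀ i, 0 < w i := fun i => lt_of_lt_of_le (by positivity) (hwpos i)
  -- minority ratio
  have hG2 : G2 d = univ.filter (fun i : Fin n => (i:ℕ) < k) := by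
    ext i
    rw [G2, mem_filter, mem_filter]
    constructor
    · rintro ⟨h1, h2⟩
      refine ⟨h1, ?_⟩
      by_contra hk'
      rw [(hdgv i hk').1] at h2
      exact lt_irrefl 1 h2
    · rintro ⟨h1, h2⟩
      refine ⟨h1, ?_⟩
      by_cases h0 : (i:ℕ) = 0
      · rw [(hd0v i h0).1]; exact hc01
      · rw [(hdkv i h0 h2).1]; exact hc1
  have hmr : MinorityRatio d α := by
    rw [MinorityRatio, hG2, card_filter_lt n k hkn]
    exact hkq
  -- utilities
  have hutilA : ∀ i, util (d i) (A i) = w i := by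
    intro i
    have h : A i = fun r => w i * d i r := rfl
    rw [h, util_smul (d i) (hdpos i 0).1 (hdpos i 1).1 (w i) (hw0 i).le]
  have hi0 : ((⟨0, lt_trans (lt_of_lt_of_le Nat.zero_lt_one hk1) hkn⟩ : Fin n) : ℕ) = 0 := rfl
  -- feasibility
  have hfeas : Feasible A := by
    constructor
    · intro i r
      rw [haval]
      exact mul_nonneg (hw0 i).le (hdpos i r).1.le
    · intro r
      fin_cases r
      · show ∑ i, A i 0 ≤ 1
        rw [sum_split hk1 hkn (fun i => A i 0) (Y * c0) ((1/N)*c) ((1/N)*1)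
          (by simp only [haval]; rw [(hd0v _ hi0).1, hweval, if_pos hi0])
          (fun i h h' => by simp only [haval]; rw [(hdkv i h h').1, hweval, if_neg h])
          (fun i h => by simp only [haval]; rw [(hdgv i h).1, hweval, if_neg (hne0 i h)])]
        rw [hYc0, ← hKdef, ← hNdef]
        have heq : c/N + (K-1)*((1/N)*c) + (N-K)*((1/N)*1) = (K*c + (N - K))/N := by
          field_simp; ring
        rw [heq, div_le_one hN0]
        nlinarith
      · show ∑ i, A i 1 ≤ 1
        rw [sum_split hk1 hkn (fun i => A i 1) (Y * 1) ((1/N)*1) ((1/N)*b)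
          (by simp only [haval]; rw [(hd0v _ hi0).2, hweval, if_pos hi0])
          (fun i h h' => by simp only [haval]; rw [(hdkv i h h').2, hweval, if_neg h])
          (fun i h => by simp only [haval]; rw [(hdgv i h).2, hweval, if_neg (hne0 i h)])]
        rw [← hKdef, ← hNdef, hYdef]
        have heq : (1 - (K-1)/N - (N-K)*b/N) * 1 + (K-1)*((1/N)*1) + (N-K)*((1/N)*b)
            = 1 := by
          field_simp
          ring
        rw [heq]
  -- SI
  have hSI : SI d A := by
    intro i
    rw [hutilA i]
    calc (1:ℝ)/(n:ℝ) = 1/N := by rw [hNdef]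
    _ ≤ w i := hwpos i
  -- EF
  have hEF : EF d A := by
    intro i j
    rw [hutilA i]
    rw [util_eq_min (d i) (A j) (hdpos i 0).1 (hdpos i 1).1
      (mul_nonneg (hw0 j).le (hdpos j 0).1.le) (mul_nonneg (hw0 j).le (hdpos j 1).1.le),
      haval j 0, haval j 1]
    by_cases hj : (j:ℕ) = 0
    · have hwj : w j = Y := by rw [hweval, if_pos hj]
      rw [hwj, (hd0v j hj).1, (hd0v j hj).2]
      by_cases hi' : (i:ℕ) = 0
      · refine le_trans (min_le_right _ _) ?_
        rw [(hd0v i hi').2, hweval, if_pos hi', mul_one, div_one]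
      · by_cases hik : (i:ℕ) < k
        · refine le_trans (min_le_left _ _) ?_
          rw [(hdkv i hi' hik).1, hYc0, hweval, if_neg hi']
          rw [div_div, mul_comm N c, ← div_div, div_self hc0'.ne']
        · refine le_trans (min_le_left _ _) ?_
          rw [(hdgv i hik).1, hYc0, hweval, if_neg (hne0 i hik), div_one]
          gcongr
    · have hwj : w j = 1/N := by rw [hweval, if_neg hj]
      rw [hwj]
      by_cases hik : (i:ℕ) < k
      · have hdi1 : d i 1 = 1 := by
          by_cases h0 : (i:ℕ) = 0
          · exact (hd0v i h0).2
          · exact (hdkv i h0 hik).2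
        refine le_trans (min_le_right _ _) ?_
        rw [hdi1, div_one]
        refine le_trans ?_ (hwpos i)
        have h1 := (hdpos j 1).2
        nlinarith [mul_nonneg (show (0:ℝ) ≤ 1/N by positivity)
          (show (0:ℝ) ≤ 1 - d j 1 by linarith)]
      · have hdi0 : d i 0 = 1 := (hdgv i hik).1
        refine le_trans (min_le_left _ _) ?_
        rw [hdi0, div_one, hweval, if_neg (hne0 i hik)]
        have h1 := (hdpos j 0).2
        nlinarith [mul_nonneg (show (0:ℝ) ≤ 1/N by positivity)
          (show (0:ℝ) ≤ 1 - d j 0 by linarith)]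
  -- social welfare of A
  have hSWA : SW d A = Y + (K-1)*(1/N) + (N-K)*(1/N) := by
    rw [SW, Finset.sum_congr rfl (fun i _ => hutilA i),
      sum_split hk1 hkn w Y (1/N) (1/N)
        (by rw [hweval, if_pos hi0])
        (fun i h h' => by rw [hweval, if_neg h])
        (fun i h => by rw [hweval, if_neg (hne0 i h)]),
      ← hKdef, ← hNdef]
  -- sum of demands
  have hs0 : ∑ j, d j 0 = c0 + (K-1)*c + (N-K)*1 := by
    rw [sum_split hk1 hkn (fun j => d j 0) c0 c 1
      ((hd0v _ hi0).1)
      (fun i h h' => (hdkv i h h').1)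
      (fun i h => (hdgv i h).1), ← hKdef, ← hNdef]
  have hs0pos : 0 < ∑ j, d j 0 := by
    rw [hs0]
    have h1 : 0 ≤ (K-1)*c := mul_nonneg (by linarith) hc0'.le
    nlinarith
  have hdrf := sw_drf d hn0 hvalid
  -- final bound
  refine ⟨n, d, hn0, hvalid, hmr, A, hfeas, hSI, hEF, ?_⟩
  rw [hdrf, hSWA]
  clear_value d w A
  have hNn : ((n:ℕ):ℝ) = N := hNdef.symm
  rw [hNn]
  have hmax0 : 0 < max (∑ j, d j 0) (∑ j, d j 1) := lt_of_lt_of_le hs0pos (le_max_left _ _)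
  have hdrfnn : 0 ≤ N / max (∑ j, d j 0) (∑ j, d j 1) := div_nonneg hN0.le hmax0.le
  have hαhalf : (α:ℝ) ≤ 1/2 := by
    rw [show ((1:ℝ)/2) = ((1/2:ℚ):ℝ) by norm_num]
    exact Rat.cast_le.2 hα
  have h2αe : (0:ℝ) ≤ 2 - α - e := by linarith
  have hstep1 : ((2:ℝ) - α - ε) * (N / max (∑ j, d j 0) (∑ j, d j 1))
      ≤ ((2:ℝ) - α - e) * (N / max (∑ j, d j 0) (∑ j, d j 1)) :=
    mul_le_mul_of_nonneg_right (by linarith) hdrfnn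
  have hstep2 : ((2:ℝ) - α - e) * (N / max (∑ j, d j 0) (∑ j, d j 1))
      ≤ ((2:ℝ) - α - e) * (N / (∑ j, d j 0)) := by
    apply mul_le_mul_of_nonneg_left _ h2αe
    exact (div_le_div_iff_of_pos_left hN0 hmax0 hs0pos).2 (le_max_left _ _)
  refine le_trans hstep1 (le_trans hstep2 ?_)
  rw [hs0, mul_div_assoc']
  have hs0pos' : (0:ℝ) < c0 + (K-1)*c + (N-K)*1 := by rw [hs0] at hs0pos; exact hs0pos
  rw [div_le_iff₀ hs0pos']
  have harith := arith2 e N K c0 he0 he2 heN hK1 h2K hc00.le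
  have hSWeq : (Y + (K-1)*(1/N) + (N-K)*(1/N)) * N = N + (N-K)*(1-b) := by
    rw [hYdef]; field_simp; ring
  have hgoal : ((2:ℝ) - α - e) * N * N ≤
      ((Y + (K-1)*(1/N) + (N-K)*(1/N)) * (c0 + (K-1)*c + (N-K)*1)) * N := by
    have hl : ((2:ℝ) - α - e) * N * N = (2*N - K - e*N) * N := by
      rw [← hαK]; ring
    have hr : ((Y + (K-1)*(1/N) + (N-K)*(1/N)) * (c0 + (K-1)*c + (N-K)*1)) * N
        = (N + (N-K)*(1-b)) * (c0 + (K-1)*c + (N-K)) := by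
      rw [← hSWeq]; ring
    rw [hl, hr, hcdef, hbdef]
    exact harith
  exact le_of_mul_le_mul_right (by linarith [hgoal]) hN0


/-- With two resources, the fair approximation ratio for social welfare of DRF
over instances with minority ratio `α` equals `2 - α`. -/
theorem drf_sw_fair_ratio (α : ℚ) (hα0 : 0 < α) (hα : α ≤ 1 / 2) :
    (∀ (n : ℕ) (d : Fin n → Fin 2 → ℝ), 0 < n → ValidInstance d → MinorityRatio d α →
      ∀ A : Fin n → Fin 2 → ℝ, Feasible A → SI d A → EF d A →
        SW d A ≤ ((2 : ℝ) - (α : ℝ)) * SW d (DRF d)) ∧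
    (∀ ε : ℝ, 0 < ε → ∃ (n : ℕ) (d : Fin n → Fin 2 → ℝ), 0 < n ∧
      ValidInstance d ∧ MinorityRatio d α ∧
      ∃ A : Fin n → Fin 2 → ℝ, Feasible A ∧ SI d A ∧ EF d A ∧
        ((2 : ℝ) - (α : ℝ) - ε) * SW d (DRF d) ≤ SW d A) := by
  exact ⟨fun n d hn hd hmr A hF hSI _ => part1 α hα n d hn hd hmr A hF hSI,
    fun ε hε => part2 α hα0 hα ε hε⟩
end

section
/- With m = 2 resources, the mechanism F1 satisfies SI, EF, PO, and SP. -/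
open Finset
open scoped Classical

-- ====== auxiliary development ======
section AuxF1

lemma util_smul_s2 {m : ℕ} [NeZero m] {dv : Fin m → ℝ} (hdv : ∀ r, 0 < dv r) {y : ℝ}
    (hy : 0 ≤ y) : util dv (fun r => y * dv r) = y := by
  have hset : {x : ℝ | 0 ≤ x ∧ ∀ r, x * dv r ≤ y * dv r} = Set.Icc 0 y := by
    ext x
    simp only [Set.mem_setOf_eq, Set.mem_Icc]
    constructor
    · rintro ⟨hx, h⟩
      exact ⟨hx, le_of_mul_le_mul_right (h 0) (hdv 0)⟩
    · rintro ⟨hx, hxy⟩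
      exact ⟨hx, fun r => mul_le_mul_of_nonneg_right hxy (hdv r).le⟩
  rw [util, hset, csSup_Icc hy]

lemma util_le {m : ℕ} {dv Av : Fin m → ℝ} (r : Fin m) (hr : 0 < dv r) (hA : 0 ≤ Av r) :
    util dv Av ≤ Av r / dv r := by
  apply Real.sSup_le
  · rintro x ⟨-, hx⟩
    exact (le_div_iff₀ hr).mpr (hx r)
  · positivity

lemma util_nonneg {m : ℕ} [NeZero m] {dv Av : Fin m → ℝ} (hdv : ∀ r, 0 < dv r)
    (hA : ∀ r, 0 ≤ Av r) : 0 ≤ util dv Av := by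
  apply le_csSup
  · refine ⟨max (Av 0 / dv 0) 0, fun x hx => ?_⟩
    exact le_max_of_le_left ((le_div_iff₀ (hdv 0)).mpr (hx.2 0))
  · exact ⟨le_refl 0, fun r => by rw [zero_mul]; exact hA r⟩

variable {n : ℕ} {d : Fin n → Fin 2 → ℝ}

/-- The scale factor of agent `i` at level `t`. -/
noncomputable def fac (d : Fin n → Fin 2 → ℝ) (t : ℝ) (i : Fin n) : ℝ :=
  if d i 0 = 1 then (1:ℝ)/n else max ((1:ℝ)/n) (t / d i 0)

lemma F1At_eq (d : Fin n → Fin 2 → ℝ) (t : ℝ) (i : Fin n) (r : Fin 2) :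
    F1At d t i r = fac d t i * d i r := rfl

/-- The water level chosen by F1. -/
noncomputable def lvl (d : Fin n → Fin 2 → ℝ) : ℝ :=
  sSup {t : ℝ | 0 ≤ t ∧ Feasible (F1At d t)}

lemma F1_eq (d : Fin n → Fin 2 → ℝ) (i : Fin n) (r : Fin 2) :
    F1 d i r = fac d (lvl d) i * d i r := rfl

lemma npos (hn : 0 < n) : (0:ℝ) < n := by exact_mod_cast hn

lemma fac_nonneg (hn : 0 < n) (t : ℝ) (i : Fin n) : 0 ≤ fac d t i := by
  have := npos (n := n) hn
  unfold fac; split_ifs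
  · positivity
  · exact le_trans (by positivity) (le_max_left _ _)

lemma fac_ge (t : ℝ) (i : Fin n) : (1:ℝ)/n ≤ fac d t i := by
  unfold fac; split_ifs
  · exact le_refl _
  · exact le_max_left _ _

lemma fac_mul {b t : ℝ} (hb : 0 < b) :
    max ((1:ℝ)/n) (t / b) * b = max (b/n) t := by
  rw [max_mul_of_nonneg _ _ hb.le, div_mul_cancel₀ _ hb.ne']
  congr 1
  rw [div_mul_eq_mul_div, one_mul]

lemma fac_lip (hd : ValidInstance d) {t δ : ℝ} (hδ : 0 ≤ δ) (i : Fin n) :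
    fac d (t + δ) i ≤ fac d t i + δ / d i 0 := by
  have h0 : 0 < d i 0 := (hd.1 i 0).1
  unfold fac; split_ifs
  · have : 0 ≤ δ / d i 0 := by positivity
    linarith
  · apply max_le
    · exact le_add_of_nonneg_right (by positivity) |>.trans
        (add_le_add_left (le_max_left _ _) _) |>.trans_eq rfl
    · rw [add_div]
      exact add_le_add_left (le_max_right _ _) _

lemma F1At_nonneg (hn : 0 < n) (hd : ValidInstance d) (t : ℝ) : NonnegAlloc (F1At d t) :=
  fun i r => mul_nonneg (fac_nonneg hn t i) (hd.1 i r).1.le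

lemma sum_inv_n (hn : 0 < n) : ∑ _i : Fin n, (1:ℝ)/n = 1 := by
  rw [Finset.sum_const, Finset.card_univ, Fintype.card_fin, nsmul_eq_mul]
  field_simp

lemma gsum_le_one (hn : 0 < n) (hd : ValidInstance d) {t : ℝ}
    (h : ∀ i, fac d t i ≤ (1:ℝ)/n) (r : Fin 2) : ∑ i, F1At d t i r ≤ 1 := by
  calc ∑ i, F1At d t i r ≤ ∑ _i : Fin n, (1:ℝ)/n := by
        apply Finset.sum_le_sum
        intro i _
        rw [F1At_eq]
        calc fac d t i * d i r ≤ ((1:ℝ)/n) * 1 :=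
              mul_le_mul (h i) (hd.1 i r).2 (hd.1 i r).1.le (by positivity)
          _ = (1:ℝ)/n := mul_one _
    _ = 1 := sum_inv_n hn

lemma fac_zero (hn : 0 < n) (hd : ValidInstance d) (i : Fin n) : fac d 0 i = (1:ℝ)/n := by
  have h0 : 0 < d i 0 := (hd.1 i 0).1
  have := npos (n := n) hn
  unfold fac; split_ifs
  · rfl
  · rw [zero_div, max_eq_left (by positivity)]

lemma feas_zero (hn : 0 < n) (hd : ValidInstance d) : Feasible (F1At d 0) := by
  refine ⟨F1At_nonneg hn hd 0, gsum_le_one hn hd (fun i => (fac_zero hn hd i).le)⟩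

lemma zero_mem (hn : 0 < n) (hd : ValidInstance d) :
    (0:ℝ) ∈ {t : ℝ | 0 ≤ t ∧ Feasible (F1At d t)} := ⟨le_refl 0, feas_zero hn hd⟩

lemma level_le (hn : 0 < n) (hd : ValidInstance d) (hG2 : (G2 d).Nonempty)
    {t : ℝ} (ht : 0 ≤ t) (hfeas : Feasible (F1At d t)) : t ≤ 1/n := by
  by_contra hcon
  push_neg at hcon
  obtain ⟨i0, hi0⟩ := hG2
  rw [G2, Finset.mem_filter] at hi0
  have key : ∀ i : Fin n, (1:ℝ)/n ≤ F1At d t i 0 ∧ (d i 0 < 1 → (1:ℝ)/n < F1At d t i 0) := by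
    intro i
    have h0 : 0 < d i 0 := (hd.1 i 0).1
    rw [F1At_eq]
    unfold fac
    split_ifs with h
    · rw [h, mul_one]
      exact ⟨le_refl _, fun hlt => absurd hlt (lt_irrefl 1)⟩
    · rw [fac_mul h0]
      have ht' : t ≤ max (d i 0 / n) t := le_max_right _ _
      constructor
      · linarith
      · intro _; linarith
  have hlt : ∑ _i : Fin n, (1:ℝ)/n < ∑ i, F1At d t i 0 := by
    apply Finset.sum_lt_sum (fun i _ => (key i).1)
    exact ⟨i0, Finset.mem_univ i0, (key i0).2 hi0.2⟩
  rw [sum_inv_n hn] at hlt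
  exact absurd (hfeas.2 0) (not_le.mpr hlt)

lemma bddAbove_S (hn : 0 < n) (hd : ValidInstance d) (hG2 : (G2 d).Nonempty) :
    BddAbove {t : ℝ | 0 ≤ t ∧ Feasible (F1At d t)} :=
  ⟨1/n, fun t ht => level_le hn hd hG2 ht.1 ht.2⟩

lemma lvl_nonneg (hn : 0 < n) (hd : ValidInstance d) (hG2 : (G2 d).Nonempty) :
    0 ≤ lvl d := le_csSup (bddAbove_S hn hd hG2) (zero_mem hn hd)

lemma lvl_le (hn : 0 < n) (hd : ValidInstance d) (hG2 : (G2 d).Nonempty) :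
    lvl d ≤ 1/n :=
  Real.sSup_le (fun t ht => level_le hn hd hG2 ht.1 ht.2) (by positivity)

lemma gsum_lip (hd : ValidInstance d) {t δ : ℝ} (hδ : 0 ≤ δ) (r : Fin 2) :
    ∑ i, F1At d (t + δ) i r ≤ (∑ i, F1At d t i r) + δ * ∑ i, d i r / d i 0 := by
  rw [Finset.mul_sum, ← Finset.sum_add_distrib]
  apply Finset.sum_le_sum
  intro i _
  rw [F1At_eq, F1At_eq]
  have h0 : 0 < d i 0 := (hd.1 i 0).1
  have hr : 0 ≤ d i r := (hd.1 i r).1.le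
  calc fac d (t + δ) i * d i r ≤ (fac d t i + δ / d i 0) * d i r :=
        mul_le_mul_of_nonneg_right (fac_lip hd hδ i) hr
    _ = fac d t i * d i r + δ * (d i r / d i 0) := by ring

lemma G2_empty_dom (hd : ValidInstance d) (hG2 : G2 d = ∅) (i : Fin n) : d i 0 = 1 := by
  have : i ∉ G2 d := by rw [hG2]; exact Finset.notMem_empty i
  rw [G2, Finset.mem_filter] at this
  push_neg at this
  exact le_antisymm (hd.1 i 0).2 (this (Finset.mem_univ i))

lemma feas_lvl (hn : 0 < n) (hd : ValidInstance d) : Feasible (F1At d (lvl d)) := by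
  rcases (G2 d).eq_empty_or_nonempty with hG2 | hG2
  · refine ⟨F1At_nonneg hn hd _, gsum_le_one hn hd (fun i => ?_) ⟩
    unfold fac
    rw [if_pos (G2_empty_dom hd hG2 i)]
  · refine ⟨F1At_nonneg hn hd _, fun r => ?_⟩
    set C : ℝ := ∑ i, d i r / d i 0 with hC
    have hC0 : 0 ≤ C := Finset.sum_nonneg fun i _ =>
      div_nonneg (hd.1 i r).1.le (hd.1 i 0).1.le
    apply le_of_forall_pos_le_add
    intro ε hε
    set ε' : ℝ := ε / (C + 1) with hε'
    have hε'pos : 0 < ε' := by positivity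
    obtain ⟨t, htS, hlt⟩ := exists_lt_of_lt_csSup ⟨0, zero_mem hn hd⟩
      (show lvl d - ε' < lvl d by linarith)
    have htle : t ≤ lvl d := le_csSup (bddAbove_S hn hd hG2) htS
    have hrw : lvl d = t + (lvl d - t) := by ring
    calc ∑ i, F1At d (lvl d) i r = ∑ i, F1At d (t + (lvl d - t)) i r := by rw [← hrw]
      _ ≤ (∑ i, F1At d t i r) + (lvl d - t) * C := gsum_lip hd (by linarith) r
      _ ≤ 1 + ε' * C := by
          have h1 := htS.2.2 r
          have h2 : (lvl d - t) * C ≤ ε' * C :=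
            mul_le_mul_of_nonneg_right (by linarith) hC0
          linarith
      _ ≤ 1 + ε := by
          have : ε' * (C + 1) = ε := div_mul_cancel₀ _ (by positivity)
          nlinarith

lemma full_lvl (hn : 0 < n) (hd : ValidInstance d) (hG2 : (G2 d).Nonempty) :
    ∃ r, ∑ i, F1At d (lvl d) i r = 1 := by
  by_contra hcon
  push_neg at hcon
  have hfe := feas_lvl hn hd
  have hlt : ∀ r : Fin 2, ∑ i, F1At d (lvl d) i r < 1 :=
    fun r => lt_of_le_of_ne (hfe.2 r) (hcon r)
  set C : Fin 2 → ℝ := fun r => ∑ i, d i r / d i 0 with hC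
  have hC0 : ∀ r, 0 ≤ C r := fun r => Finset.sum_nonneg fun i _ =>
    div_nonneg (hd.1 i r).1.le (hd.1 i 0).1.le
  set δ : ℝ := min ((1 - ∑ i, F1At d (lvl d) i 0) / (C 0 + 1))
    ((1 - ∑ i, F1At d (lvl d) i 1) / (C 1 + 1)) with hδdef
  have hδpos : 0 < δ := by
    apply lt_min
    · exact div_pos (by linarith [hlt 0]) (by linarith [hC0 0])
    · exact div_pos (by linarith [hlt 1]) (by linarith [hC0 1])
  have hmem : lvl d + δ ∈ {t : ℝ | 0 ≤ t ∧ Feasible (F1At d t)} := by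
    refine ⟨by linarith [lvl_nonneg hn hd hG2], F1At_nonneg hn hd _, fun r => ?_⟩
    have hδr : δ ≤ (1 - ∑ i, F1At d (lvl d) i r) / (C r + 1) := by
      fin_cases r
      · exact min_le_left _ _
      · exact min_le_right _ _
    have hδr' : δ * (C r + 1) ≤ 1 - ∑ i, F1At d (lvl d) i r := by
      rw [← le_div_iff₀ (by linarith [hC0 r])]
      exact hδr
    calc ∑ i, F1At d (lvl d + δ) i r
        ≤ (∑ i, F1At d (lvl d) i r) + δ * C r := gsum_lip hd hδpos.le r
      _ ≤ 1 := by nlinarith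
  have hle : lvl d + δ ≤ lvl d := le_csSup (bddAbove_S hn hd hG2) hmem
  linarith

end AuxF1

section Aux2
variable {n : ℕ} {d : Fin n → Fin 2 → ℝ}

lemma dom1 (hd : ValidInstance d) {i : Fin n} (h : d i 0 < 1) : d i 1 = 1 := by
  obtain ⟨r, hr⟩ := hd.2 i
  fin_cases r
  · exact absurd hr h.ne
  · exact hr

lemma mem_G2 {i : Fin n} (h : d i 0 < 1) : (G2 d).Nonempty :=
  ⟨i, by simp [G2, h]⟩

lemma util_F1 (hn : 0 < n) (hd : ValidInstance d) (i : Fin n) :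
    util (d i) (F1 d i) = fac d (lvl d) i := by
  have h : F1 d i = fun r => fac d (lvl d) i * d i r := rfl
  rw [h, util_smul_s2 (fun r => (hd.1 i r).1) (fac_nonneg hn _ i)]

lemma si_F1 (hn : 0 < n) (hd : ValidInstance d) : SI d (F1 d) := fun i => by
  rw [util_F1 hn hd i]; exact fac_ge _ i

lemma ef_F1 (hn : 0 < n) (hd : ValidInstance d) : EF d (F1 d) := by
  intro i j
  have hnR := npos (n := n) hn
  have hdi0 := (hd.1 i 0).1
  have hdj0 := (hd.1 j 0).1
  rw [util_F1 hn hd i]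
  have hb0 : 0 ≤ F1 d j 0 := mul_nonneg (fac_nonneg hn _ j) hdj0.le
  have hb1 : 0 ≤ F1 d j 1 := mul_nonneg (fac_nonneg hn _ j) (hd.1 j 1).1.le
  rcases eq_or_lt_of_le (hd.1 i 0).2 with hi | hi
  · -- d i 0 = 1
    have hfi : fac d (lvl d) i = 1/n := by unfold fac; rw [if_pos hi]
    rw [hfi]
    have hF : F1 d j 0 ≤ 1/n := by
      rw [F1_eq]
      unfold fac
      split_ifs with hj
      · simp [hj]
      · have hjlt : d j 0 < 1 := lt_of_le_of_ne (hd.1 j 0).2 hj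
        rw [fac_mul hdj0]
        apply max_le
        · have h01 : d j 0 ≤ 1 := (hd.1 j 0).2
          gcongr
        · exact lvl_le hn hd (mem_G2 hjlt)
    calc util (d i) (F1 d j) ≤ F1 d j 0 / d i 0 := util_le 0 hdi0 hb0
      _ = F1 d j 0 := by rw [hi, div_one]
      _ ≤ 1/n := hF
  · -- d i 0 < 1
    have ha1 : d i 1 = 1 := dom1 hd hi
    have hfi : fac d (lvl d) i = max ((1:ℝ)/n) (lvl d / d i 0) := by
      unfold fac; rw [if_neg hi.ne]
    rw [hfi]
    by_cases hj : d j 0 = 1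
    · calc util (d i) (F1 d j) ≤ F1 d j 1 / d i 1 := util_le 1 (hd.1 i 1).1 hb1
        _ = F1 d j 1 := by rw [ha1, div_one]
        _ = (1/n) * d j 1 := by rw [F1_eq]; unfold fac; rw [if_pos hj]
        _ ≤ 1/n := by
            have := mul_le_mul_of_nonneg_left (hd.1 j 1).2
              (show (0:ℝ) ≤ 1/n by positivity)
            simpa using this
        _ ≤ max ((1:ℝ)/n) (lvl d / d i 0) := le_max_left _ _
    · have hjlt : d j 0 < 1 := lt_of_le_of_ne (hd.1 j 0).2 hj
      have hj1 : d j 1 = 1 := dom1 hd hjlt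
      rcases le_total (lvl d / d j 0) (1/n) with hc | hc
      · have hfj : fac d (lvl d) j = 1/n := by
          unfold fac; rw [if_neg hj, max_eq_left hc]
        calc util (d i) (F1 d j) ≤ F1 d j 1 / d i 1 := util_le 1 (hd.1 i 1).1 hb1
          _ = F1 d j 1 := by rw [ha1, div_one]
          _ = 1/n := by rw [F1_eq, hfj, hj1, mul_one]
          _ ≤ max ((1:ℝ)/n) (lvl d / d i 0) := le_max_left _ _
      · have hfj : fac d (lvl d) j = lvl d / d j 0 := by
          unfold fac; rw [if_neg hj, max_eq_right hc]
        calc util (d i) (F1 d j) ≤ F1 d j 0 / d i 0 := util_le 0 hdi0 hb0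
          _ = (lvl d / d j 0 * d j 0) / d i 0 := by rw [F1_eq, hfj]
          _ = lvl d / d i 0 := by rw [div_mul_cancel₀ _ hdj0.ne']
          _ ≤ max ((1:ℝ)/n) (lvl d / d i 0) := le_max_right _ _

lemma po_F1 (hn : 0 < n) (hd : ValidInstance d) : PO d (F1 d) := by
  rintro ⟨A', hA', hge, i0, hlt⟩
  obtain ⟨r, hr⟩ : ∃ r, ∑ i, F1 d i r = 1 := by
    rcases (G2 d).eq_empty_or_nonempty with hG2 | hG2
    · refine ⟨0, ?_⟩
      have hv : ∀ i, F1 d i 0 = 1/n := fun i => by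
        rw [F1_eq]
        unfold fac
        rw [if_pos (G2_empty_dom hd hG2 i), G2_empty_dom hd hG2 i, mul_one]
      rw [Finset.sum_congr rfl (fun i _ => hv i)]
      exact sum_inv_n hn
    · exact full_lvl hn hd hG2
  have key : ∀ i : Fin n, F1 d i r ≤ A' i r := by
    intro i
    have h1 := hge i
    rw [util_F1 hn hd i] at h1
    have h2 : util (d i) (A' i) ≤ A' i r / d i r := util_le r (hd.1 i r).1 (hA'.1 i r)
    rw [F1_eq]
    calc fac d (lvl d) i * d i r ≤ util (d i) (A' i) * d i r :=
          mul_le_mul_of_nonneg_right h1 (hd.1 i r).1.le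
      _ ≤ A' i r := (le_div_iff₀ (hd.1 i r).1).mp h2
  have keys : F1 d i0 r < A' i0 r := by
    have h1 := hlt
    rw [util_F1 hn hd i0] at h1
    have h2 : util (d i0) (A' i0) ≤ A' i0 r / d i0 r := util_le r (hd.1 i0 r).1 (hA'.1 i0 r)
    rw [F1_eq]
    calc fac d (lvl d) i0 * d i0 r < util (d i0) (A' i0) * d i0 r :=
          mul_lt_mul_of_pos_right h1 (hd.1 i0 r).1
      _ ≤ A' i0 r := (le_div_iff₀ (hd.1 i0 r).1).mp h2
  have hsum : (1:ℝ) < ∑ i, A' i r := by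
    rw [← hr]
    exact Finset.sum_lt_sum (fun i _ => key i) ⟨i0, Finset.mem_univ i0, keys⟩
  linarith [hA'.2 r]

end Aux2

section Aux3
variable {n : ℕ} {d : Fin n → Fin 2 → ℝ}

lemma F1At_mono (hd : ValidInstance d) {s t : ℝ} (hst : s ≤ t) (j : Fin n) (r : Fin 2) :
    F1At d s j r ≤ F1At d t j r := by
  have h0 : 0 < d j 0 := (hd.1 j 0).1
  rw [F1At_eq, F1At_eq]
  apply mul_le_mul_of_nonneg_right _ (hd.1 j r).1.le
  unfold fac
  split_ifs
  · exact le_refl _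
  · exact max_le_max (le_refl _) (by gcongr)

lemma sp_F1 (hn : 0 < n) (hd : ValidInstance d) {d' : Fin n → Fin 2 → ℝ}
    (hd' : ValidInstance d') {i : Fin n} (hdiff : ∀ j, j ≠ i → d' j = d j) :
    util (d i) (F1 d' i) ≤ util (d i) (F1 d i) := by
  have hnR := npos (n := n) hn
  have hdi0 := (hd.1 i 0).1
  have hdi1 := (hd.1 i 1).1
  have hc0 := (hd'.1 i 0).1
  rw [util_F1 hn hd i]
  have hB0 : 0 ≤ F1 d' i 0 := mul_nonneg (fac_nonneg hn _ i) hc0.le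
  have hB1 : 0 ≤ F1 d' i 1 := mul_nonneg (fac_nonneg hn _ i) (hd'.1 i 1).1.le
  by_cases hc : d' i 0 = 1
  · by_cases ha : d i 0 = 1
    · have hfi : fac d (lvl d) i = (1:ℝ)/n := by unfold fac; rw [if_pos ha]
      have hBv : F1 d' i 0 = (1:ℝ)/n := by
        rw [F1_eq]; unfold fac; rw [if_pos hc, hc, mul_one]
      rw [hfi]
      calc util (d i) (F1 d' i) ≤ F1 d' i 0 / d i 0 := util_le 0 hdi0 hB0
        _ = (1:ℝ)/n := by rw [hBv, ha, div_one]
    · have halt : d i 0 < 1 := lt_of_le_of_ne (hd.1 i 0).2 ha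
      have ha1 : d i 1 = 1 := dom1 hd halt
      have hBv1 : F1 d' i 1 = ((1:ℝ)/n) * d' i 1 := by
        rw [F1_eq]; unfold fac; rw [if_pos hc]
      calc util (d i) (F1 d' i) ≤ F1 d' i 1 / d i 1 := util_le 1 hdi1 hB1
        _ = ((1:ℝ)/n) * d' i 1 := by rw [hBv1, ha1, div_one]
        _ ≤ (1:ℝ)/n := by
            have := mul_le_mul_of_nonneg_left (hd'.1 i 1).2
              (show (0:ℝ) ≤ 1/n by positivity)
            simpa using this
        _ ≤ fac d (lvl d) i := fac_ge _ i
  · have hclt : d' i 0 < 1 := lt_of_le_of_ne (hd'.1 i 0).2 hc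
    have hc1 : d' i 1 = 1 := dom1 hd' hclt
    have hG2' : (G2 d').Nonempty := mem_G2 hclt
    have hT'0 : 0 ≤ lvl d' := lvl_nonneg hn hd' hG2'
    have hT'le : lvl d' ≤ 1/n := lvl_le hn hd' hG2'
    have hBv0 : F1 d' i 0 = max (d' i 0 / n) (lvl d') := by
      rw [F1_eq]; unfold fac; rw [if_neg hc, fac_mul hc0]
    have hBv1 : F1 d' i 1 = max ((1:ℝ)/n) (lvl d' / d' i 0) := by
      rw [F1_eq]; unfold fac; rw [if_neg hc, hc1, mul_one]
    by_cases ha : d i 0 = 1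
    · have hfi : fac d (lvl d) i = (1:ℝ)/n := by unfold fac; rw [if_pos ha]
      rw [hfi]
      have hc2 : d' i 0 / n ≤ (1:ℝ)/n := by
        have h01 : d' i 0 ≤ 1 := (hd'.1 i 0).2
        gcongr
      calc util (d i) (F1 d' i) ≤ F1 d' i 0 / d i 0 := util_le 0 hdi0 hB0
        _ = max (d' i 0 / n) (lvl d') := by rw [hBv0, ha, div_one]
        _ ≤ (1:ℝ)/n := max_le hc2 hT'le
    · have halt : d i 0 < 1 := lt_of_le_of_ne (hd.1 i 0).2 ha
      have ha1 : d i 1 = 1 := dom1 hd halt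
      have hG2 : (G2 d).Nonempty := mem_G2 halt
      have hT0 : 0 ≤ lvl d := lvl_nonneg hn hd hG2
      have hfi : fac d (lvl d) i = max ((1:ℝ)/n) (lvl d / d i 0) := by
        unfold fac; rw [if_neg ha]
      rw [hfi]
      rcases le_or_gt (lvl d' / d' i 0) ((1:ℝ)/n) with h1 | h1
      · calc util (d i) (F1 d' i) ≤ F1 d' i 1 / d i 1 := util_le 1 hdi1 hB1
          _ = max ((1:ℝ)/n) (lvl d' / d' i 0) := by rw [hBv1, ha1, div_one]
          _ = (1:ℝ)/n := max_eq_left h1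
          _ ≤ max ((1:ℝ)/n) (lvl d / d i 0) := le_max_left _ _
      · have hcn : d' i 0 / (n:ℝ) < lvl d' := by
          have h2 := (lt_div_iff₀ hc0).mp h1
          calc d' i 0 / (n:ℝ) = 1/(n:ℝ) * d' i 0 := by ring
            _ < lvl d' := h2
        rcases le_or_gt (d' i 0) (d i 0) with hca | hca
        · -- under-reporting
          have claim : lvl d' ≤ max (d i 0 / n) (lvl d) := by
            by_contra hcon
            push_neg at hcon
            have han : d i 0 / (n:ℝ) < lvl d' := lt_of_le_of_lt (le_max_left _ _) hcon
            have hterm : ∀ j r, F1At d (lvl d') j r ≤ F1At d' (lvl d') j r := by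
              intro j r
              by_cases hji : j = i
              · subst hji
                fin_cases r
                · show F1At d (lvl d') j 0 ≤ F1At d' (lvl d') j 0
                  have hL : F1At d (lvl d') j 0 = max (d j 0 / n) (lvl d') := by
                    rw [F1At_eq]; unfold fac; rw [if_neg ha, fac_mul hdi0]
                  have hR : F1At d' (lvl d') j 0 = max (d' j 0 / n) (lvl d') := by
                    rw [F1At_eq]; unfold fac; rw [if_neg hc, fac_mul hc0]
                  rw [hL, hR, max_eq_right han.le, max_eq_right hcn.le]
                · show F1At d (lvl d') j 1 ≤ F1At d' (lvl d') j 1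
                  have hL : F1At d (lvl d') j 1 = max ((1:ℝ)/n) (lvl d' / d j 0) := by
                    rw [F1At_eq]; unfold fac; rw [if_neg ha, ha1, mul_one]
                  have hR : F1At d' (lvl d') j 1 = max ((1:ℝ)/n) (lvl d' / d' j 0) := by
                    rw [F1At_eq]; unfold fac; rw [if_neg hc, hc1, mul_one]
                  rw [hL, hR]
                  have hdiv : lvl d' / d j 0 ≤ lvl d' / d' j 0 := by gcongr
                  exact max_le_max (le_refl _) hdiv
              · have hrw := hdiff j hji
                simp only [F1At, hrw, le_refl]
            have hTS : lvl d' ∈ {t : ℝ | 0 ≤ t ∧ Feasible (F1At d t)} := by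
              refine ⟨hT'0, F1At_nonneg hn hd _, fun r => ?_⟩
              calc ∑ j, F1At d (lvl d') j r ≤ ∑ j, F1At d' (lvl d') j r :=
                    Finset.sum_le_sum (fun j _ => hterm j r)
                _ ≤ 1 := (feas_lvl hn hd').2 r
            have hle : lvl d' ≤ lvl d := le_csSup (bddAbove_S hn hd hG2) hTS
            have := le_max_right (d i 0 / (n:ℝ)) (lvl d)
            linarith
          have hstep : lvl d' / d i 0 ≤ max ((1:ℝ)/n) (lvl d / d i 0) := by
            rcases le_total (d i 0 / (n:ℝ)) (lvl d) with h2 | h2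
            · have hll : lvl d' ≤ lvl d := by rw [max_eq_right h2] at claim; exact claim
              exact le_trans (by gcongr) (le_max_right _ _)
            · have h3 : lvl d' ≤ d i 0 / n := by rw [max_eq_left h2] at claim; exact claim
              have h4 : lvl d' / d i 0 ≤ (d i 0 / n) / d i 0 := by gcongr
              have h5 : (d i 0 / (n:ℝ)) / d i 0 = 1/(n:ℝ) := by
                field_simp
              exact le_trans (h5 ▸ h4) (le_max_left _ _)
          calc util (d i) (F1 d' i) ≤ F1 d' i 0 / d i 0 := util_le 0 hdi0 hB0
            _ = max (d' i 0 / n) (lvl d') / d i 0 := by rw [hBv0]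
            _ = lvl d' / d i 0 := by rw [max_eq_right hcn.le]
            _ ≤ max ((1:ℝ)/n) (lvl d / d i 0) := hstep
        · -- over-reporting
          have claim : lvl d' / d' i 0 ≤ max ((1:ℝ)/n) (lvl d / d i 0) := by
            by_contra hcon
            push_neg at hcon
            set s : ℝ := d i 0 * (lvl d' / d' i 0) with hs
            have hq0 : 0 ≤ lvl d' / d' i 0 := div_nonneg hT'0 hc0.le
            have hs0 : 0 ≤ s := by rw [hs]; positivity
            have hsT' : s ≤ lvl d' := by
              calc s = (lvl d' / d' i 0) * d i 0 := by rw [hs]; ring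
                _ ≤ (lvl d' / d' i 0) * d' i 0 := by gcongr
                _ = lvl d' := div_mul_cancel₀ _ hc0.ne'
            have hsa : d i 0 / (n:ℝ) < s := by
              have h2 : (1:ℝ)/n < lvl d' / d' i 0 := lt_of_le_of_lt (le_max_left _ _) hcon
              have h3 := mul_lt_mul_of_pos_left h2 hdi0
              calc d i 0 / (n:ℝ) = d i 0 * (1/(n:ℝ)) := by ring
                _ < d i 0 * (lvl d' / d' i 0) := h3
                _ = s := hs.symm
            have hsT : lvl d < s := by
              have h2 : lvl d / d i 0 < lvl d' / d' i 0 := lt_of_le_of_lt (le_max_right _ _) hcon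
              have h3 := mul_lt_mul_of_pos_left h2 hdi0
              have h4 : d i 0 * (lvl d / d i 0) = lvl d := by
                rw [mul_comm, div_mul_cancel₀ _ hdi0.ne']
              calc lvl d = d i 0 * (lvl d / d i 0) := h4.symm
                _ < d i 0 * (lvl d' / d' i 0) := h3
                _ = s := hs.symm
            have hsdiv : s / d i 0 = lvl d' / d' i 0 := by
              rw [hs]; exact mul_div_cancel_left₀ _ hdi0.ne'
            have hterm : ∀ j r, F1At d s j r ≤ F1At d' (lvl d') j r := by
              intro j r
              by_cases hji : j = i
              · subst hji
                fin_cases r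
                · show F1At d s j 0 ≤ F1At d' (lvl d') j 0
                  have hL : F1At d s j 0 = max (d j 0 / n) s := by
                    rw [F1At_eq]; unfold fac; rw [if_neg ha, fac_mul hdi0]
                  have hR : F1At d' (lvl d') j 0 = max (d' j 0 / n) (lvl d') := by
                    rw [F1At_eq]; unfold fac; rw [if_neg hc, fac_mul hc0]
                  rw [hL, hR, max_eq_right hsa.le, max_eq_right hcn.le]
                  exact hsT'
                · show F1At d s j 1 ≤ F1At d' (lvl d') j 1
                  have hL : F1At d s j 1 = max ((1:ℝ)/n) (s / d j 0) := by
                    rw [F1At_eq]; unfold fac; rw [if_neg ha, ha1, mul_one]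
                  have hR : F1At d' (lvl d') j 1 = max ((1:ℝ)/n) (lvl d' / d' j 0) := by
                    rw [F1At_eq]; unfold fac; rw [if_neg hc, hc1, mul_one]
                  rw [hL, hR, hsdiv]
              · have hmono : F1At d s j r ≤ F1At d (lvl d') j r :=
                  F1At_mono hd hsT' j r
                have hrw := hdiff j hji
                have heq : F1At d (lvl d') j r = F1At d' (lvl d') j r := by
                  simp only [F1At, hrw]
                linarith
            have hTS : s ∈ {t : ℝ | 0 ≤ t ∧ Feasible (F1At d t)} := by
              refine ⟨hs0, F1At_nonneg hn hd _, fun r => ?_⟩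
              calc ∑ j, F1At d s j r ≤ ∑ j, F1At d' (lvl d') j r :=
                    Finset.sum_le_sum (fun j _ => hterm j r)
                _ ≤ 1 := (feas_lvl hn hd').2 r
            have hle : s ≤ lvl d := le_csSup (bddAbove_S hn hd hG2) hTS
            linarith
          calc util (d i) (F1 d' i) ≤ F1 d' i 1 / d i 1 := util_le 1 hdi1 hB1
            _ = max ((1:ℝ)/n) (lvl d' / d' i 0) := by rw [hBv1, ha1, div_one]
            _ = lvl d' / d' i 0 := max_eq_right h1.le
            _ ≤ max ((1:ℝ)/n) (lvl d / d i 0) := claim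

end Aux3


/-- With two resources, mechanism F1 satisfies SI, EF, PO and SP. -/
theorem f1_properties :
    (∀ (n : ℕ), 0 < n → ∀ d : Fin n → Fin 2 → ℝ, ValidInstance d →
      Feasible (F1 d) ∧ SI d (F1 d) ∧ EF d (F1 d) ∧ PO d (F1 d)) ∧
    (∀ (n : ℕ), 0 < n → ∀ (d d' : Fin n → Fin 2 → ℝ) (i : Fin n),
      ValidInstance d → ValidInstance d' → (∀ j, j ≠ i → d' j = d j) →
      util (d i) (F1 d' i) ≤ util (d i) (F1 d i)) := by
  constructor
  · intro n hn d hd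
    exact ⟨feas_lvl hn hd, si_F1 hn hd, ef_F1 hn hd, po_F1 hn hd⟩
  · intro n hn d d' i hd hd' hdiff
    exact sp_F1 hn hd hd' hdiff
end

section
/- With m = 2 resources, let A be the allocation produced by mechanism F2 on an instance with R_1 > 0 and R_2 > 0, and set ΔS_1 = Σ_{i∈G1} A_{i,1} − |G1|/n and ΔS_2 = Σ_{i∈G2} A_{i,2} − |G2|/n. Let A* be a feasible allocation satisfying SI and EF that maximizes social welfare among such allocations, with ΔS*_1 = Σ_{i∈G1} A*_{i,1} − |G1|/n and ΔS*_2 = Σ_{i∈G2} A*_{i,2} − |G2|/n. Then for each k ∈ {1, 2}, if resource k is fully allocated in A (Σ_i A_{i,k} = 1), then ΔS_k ≥ ΔS*_k. -/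
open Finset
open scoped Classical

/-- Residual amount of resource 1 after every agent receives `(1/n) • d i`. -/
noncomputable def R1 {n : ℕ} (d : Fin n → Fin 2 → ℝ) : ℝ :=
  1 - ((G1 d).card : ℝ) / n - (∑ i ∈ G2 d, d i 0) / n

/-- Residual amount of resource 2 after every agent receives `(1/n) • d i`. -/
noncomputable def R2 {n : ℕ} (d : Fin n → Fin 2 → ℝ) : ℝ :=
  1 - ((G2 d).card : ℝ) / n - (∑ i ∈ G1 d, d i 1) / n

/-- Total increase over the equal split of the resource-1 shares of `G1`. -/
noncomputable def dS1 {n : ℕ} (d A : Fin n → Fin 2 → ℝ) : ℝ :=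
  (∑ i ∈ G1 d, A i 0) - ((G1 d).card : ℝ) / n

/-- Total increase over the equal split of the resource-2 shares of `G2`. -/
noncomputable def dS2 {n : ℕ} (d A : Fin n → Fin 2 → ℝ) : ℝ :=
  (∑ i ∈ G2 d, A i 1) - ((G2 d).card : ℝ) / n

/-- Water-filling structure of the F2-type allocations: within `G1` the
resource-2 shares are `max (d i 1 / n) t1`, within `G2` the resource-1 shares
are `max (d i 0 / n) t2`, and bundles are proportional to demands. -/
def Waterfill {n : ℕ} (d A : Fin n → Fin 2 → ℝ) (t1 t2 : ℝ) : Prop :=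
  ∀ i, (d i 0 = 1 → A i 1 = max (d i 1 / n) t1 ∧ A i 0 = A i 1 / d i 1) ∧
       (d i 0 < 1 → A i 0 = max (d i 0 / n) t2 ∧ A i 1 = A i 0 / d i 0)

/-- The output of an F2-type mechanism whose coupled rates follow the ratio
`ρ1 / ρ2`: a feasible water-filling allocation with
`dS1 / dS2 = ρ1 / ρ2` in which some resource is fully allocated. -/
def IsF2AllocWith {n : ℕ} (d A : Fin n → Fin 2 → ℝ) (ρ1 ρ2 : ℝ) : Prop :=
  ∃ t1 t2 : ℝ, 0 ≤ t1 ∧ 0 ≤ t2 ∧ Waterfill d A t1 t2 ∧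
    dS1 d A * ρ2 = dS2 d A * ρ1 ∧ Feasible A ∧ ∃ r, ∑ i, A i r = 1

/-- The output of mechanism F2 (rates coupled by `R1 / R2`). -/
def IsF2Alloc {n : ℕ} (d A : Fin n → Fin 2 → ℝ) : Prop :=
  IsF2AllocWith d A (R1 d) (R2 d)

/-- `R*_1 = R_1 + d_{i*,1}/n` where `i*` minimizes `d i 0` over `G2`. -/
noncomputable def R1s {n : ℕ} (d : Fin n → Fin 2 → ℝ) : ℝ :=
  R1 d + sInf ((fun i => d i 0) '' {i : Fin n | d i 0 < 1}) / n

/-- `R*_2 = R_2 + d_{j*,2}/n` where `j*` minimizes `d j 1` over `G1`. -/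
noncomputable def R2s {n : ℕ} (d : Fin n → Fin 2 → ℝ) : ℝ :=
  R2 d + sInf ((fun i => d i 1) '' {i : Fin n | d i 0 = 1}) / n

/-- The output of mechanism F2* (rates coupled by `R*_1 / R*_2`). -/
def IsF2sAlloc {n : ℕ} (d A : Fin n → Fin 2 → ℝ) : Prop :=
  IsF2AllocWith d A (R1s d) (R2s d)



set_option maxHeartbeats 1600000

section Aux

/-- For positive 2-dim demands and nonneg bundle, util is the min of ratios. -/
lemma util2 (dv Av : Fin 2 → ℝ) (h0 : 0 < dv 0) (h1 : 0 < dv 1)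
    (hA0 : 0 ≤ Av 0) (hA1 : 0 ≤ Av 1) :
    util dv Av = min (Av 0 / dv 0) (Av 1 / dv 1) := by
  have hm : 0 ≤ min (Av 0 / dv 0) (Av 1 / dv 1) :=
    le_min (div_nonneg hA0 h0.le) (div_nonneg hA1 h1.le)
  have hset : {y : ℝ | 0 ≤ y ∧ ∀ r, y * dv r ≤ Av r}
      = Set.Icc 0 (min (Av 0 / dv 0) (Av 1 / dv 1)) := by
    ext y
    simp only [Set.mem_setOf_eq, Set.mem_Icc, le_min_iff]
    constructor
    · rintro ⟨hy, hr⟩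
      exact ⟨hy, (le_div_iff₀ h0).2 (hr 0), (le_div_iff₀ h1).2 (hr 1)⟩
    · rintro ⟨hy, hy0, hy1⟩
      refine ⟨hy, fun r => ?_⟩
      fin_cases r
      · exact (le_div_iff₀ h0).1 hy0
      · exact (le_div_iff₀ h1).1 hy1
  rw [util, hset, csSup_Icc hm]

lemma util2_ge (dv Av : Fin 2 → ℝ) (h0 : 0 < dv 0) (h1 : 0 < dv 1)
    (y : ℝ) (hy : 0 ≤ y) (hy0 : y * dv 0 ≤ Av 0) (hy1 : y * dv 1 ≤ Av 1) :
    y ≤ util dv Av := by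
  have hA0 : 0 ≤ Av 0 := le_trans (by positivity) hy0
  have hA1 : 0 ≤ Av 1 := le_trans (by positivity) hy1
  rw [util2 dv Av h0 h1 hA0 hA1]
  exact le_min ((le_div_iff₀ h0).2 hy0) ((le_div_iff₀ h1).2 hy1)

/-- identity: c * max (1/n) (s/c) = max (c/n) s for c > 0 -/
lemma max_scale (c s t : ℝ) (hc : 0 < c) : c * max t (s / c) = max (c * t) s := by
  rw [mul_max_of_nonneg _ _ hc.le, mul_div_cancel₀ _ hc.ne']

noncomputable def Dfun (n : ℕ) (S : Finset (Fin n)) (w : Fin n → ℝ) (x : ℝ) : ℝ :=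
  ∑ i ∈ S, (max ((1:ℝ)/n) (x / w i) - 1/n)

noncomputable def Wfun (n : ℕ) (S : Finset (Fin n)) (w : Fin n → ℝ) (x : ℝ) : ℝ :=
  ∑ i ∈ S, (max (w i / n) x - w i / n)

variable {n : ℕ} {S : Finset (Fin n)} {w : Fin n → ℝ}

lemma Dfun_nonneg (x : ℝ) : 0 ≤ Dfun n S w x :=
  Finset.sum_nonneg fun i _ => by simp [le_max_left]

lemma Wfun_nonneg (x : ℝ) : 0 ≤ Wfun n S w x :=
  Finset.sum_nonneg fun i _ => by simp [le_max_left]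

lemma Dfun_mono (hw : ∀ i ∈ S, 0 < w i) {x y : ℝ} (hxy : x ≤ y) :
    Dfun n S w x ≤ Dfun n S w y := by
  refine Finset.sum_le_sum fun i hi => ?_
  have h := hw i hi
  have : x / w i ≤ y / w i := by gcongr
  have : max ((1:ℝ)/n) (x / w i) ≤ max ((1:ℝ)/n) (y / w i) := by gcongr
  linarith

lemma Wfun_mono {x y : ℝ} (hxy : x ≤ y) : Wfun n S w x ≤ Wfun n S w y := by
  refine Finset.sum_le_sum fun i _ => ?_
  have : max (w i / n) x ≤ max (w i / n) y := by gcongr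
  linarith

lemma Dfun_cont : Continuous (Dfun n S w) := by
  apply continuous_finset_sum
  intro i _
  exact ((continuous_const.max (continuous_id.div_const _))).sub continuous_const

lemma Wfun_cont : Continuous (Wfun n S w) := by
  apply continuous_finset_sum
  intro i _
  exact ((continuous_const.max continuous_id)).sub continuous_const

lemma Dfun_zero (hw : ∀ i ∈ S, 0 < w i) : Dfun n S w 0 = 0 := by
  refine Finset.sum_eq_zero fun i hi => ?_
  rw [zero_div, max_eq_left (by positivity), sub_self]

lemma Wfun_zero (hw : ∀ i ∈ S, 0 < w i) : Wfun n S w 0 = 0 := by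
  refine Finset.sum_eq_zero fun i hi => ?_
  have h := hw i hi
  have hnn : (0:ℝ) ≤ w i / n := by positivity
  rw [max_eq_left hnn, sub_self]

lemma Wfun_inv (hn : 0 < n) (hw : ∀ i ∈ S, 0 < w i ∧ w i ≤ 1) :
    Wfun n S w (1/n) = (S.card - ∑ i ∈ S, w i)/n := by
  have hn' : (0:ℝ) < n := by exact_mod_cast hn
  have : Wfun n S w (1/n) = ∑ i ∈ S, ((1:ℝ)/n - w i/n) := by
    refine Finset.sum_congr rfl fun i hi => ?_
    have : w i / n ≤ 1 / n := by gcongr; exact (hw i hi).2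
    rw [max_eq_right this]
  rw [this, Finset.sum_sub_distrib, Finset.sum_const, ← Finset.sum_div]
  push_cast
  ring

lemma Wfun_gt (hn : 0 < n) (hS : S.Nonempty) (hw : ∀ i ∈ S, 0 < w i ∧ w i ≤ 1)
    {x : ℝ} (hx : 1/n < x) : (S.card - ∑ i ∈ S, w i)/n < Wfun n S w x := by
  have hn' : (0:ℝ) < n := by exact_mod_cast hn
  have h1 : ((S.card : ℝ) - ∑ i ∈ S, w i)/n = ∑ i ∈ S, ((1:ℝ)/n - w i/n) := by
    rw [Finset.sum_sub_distrib, Finset.sum_const, ← Finset.sum_div]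
    push_cast; ring
  rw [h1]
  refine Finset.sum_lt_sum_of_nonempty hS fun i hi => ?_
  have hwn : w i / n ≤ 1 / n := by gcongr; exact (hw i hi).2
  have hmx : max (w i / n) x = x := max_eq_right (le_of_lt (lt_of_le_of_lt hwn hx))
  rw [hmx]
  linarith

/-- weighted term identity -/
lemma DW_identity (hw : ∀ i ∈ S, 0 < w i) (x : ℝ) :
    ∀ i ∈ S, w i * (max ((1:ℝ)/n) (x / w i) - 1/n) = max (w i / n) x - w i/n := by
  intro i hi
  have h := hw i hi
  rw [mul_sub, mul_max_of_nonneg _ _ h.le, mul_div_cancel₀ _ h.ne', mul_one_div]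

/-- increments of W are at most increments of D -/
lemma W_inc_le_D_inc (hw : ∀ i ∈ S, 0 < w i ∧ w i ≤ 1) {s t : ℝ} (hst : s ≤ t) :
    Wfun n S w t - Wfun n S w s ≤ Dfun n S w t - Dfun n S w s := by
  rw [Wfun, Wfun, Dfun, Dfun, ← Finset.sum_sub_distrib, ← Finset.sum_sub_distrib]
  refine Finset.sum_le_sum fun i hi => ?_
  obtain ⟨h0, h1⟩ := hw i hi
  have e1 := DW_identity (fun i hi => (hw i hi).1) t i hi
  have e2 := DW_identity (fun i hi => (hw i hi).1) s i hi
  have hDinc : 0 ≤ max ((1:ℝ)/n) (t / w i) - max ((1:ℝ)/n) (s / w i) := by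
    have : s / w i ≤ t / w i := by gcongr
    have : max ((1:ℝ)/n) (s / w i) ≤ max ((1:ℝ)/n) (t / w i) := by gcongr
    linarith
  nlinarith [e1, e2, hDinc, h1]

lemma Dfun_ge (hS : S.Nonempty) (hw : ∀ i ∈ S, 0 < w i ∧ w i ≤ 1)
    {x : ℝ} (hx : 0 ≤ x) : x - 1/n ≤ Dfun n S w x := by
  obtain ⟨i0, hi0⟩ := hS
  have key : x - 1/n ≤ max ((1:ℝ)/n) (x / w i0) - 1/n := by
    have hxd : x ≤ x / w i0 := by
      rw [le_div_iff₀ (hw i0 hi0).1]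
      nlinarith [(hw i0 hi0).2, hx]
    have : x ≤ max ((1:ℝ)/n) (x / w i0) := le_trans hxd (le_max_right _ _)
    linarith
  calc x - 1/n ≤ max ((1:ℝ)/n) (x / w i0) - 1/n := key
    _ ≤ Dfun n S w x := Finset.single_le_sum (f := fun i => max ((1:ℝ)/n) (x / w i) - 1/n)
        (fun i _ => by simp [le_max_left]) hi0

lemma exists_level (hS : S.Nonempty) (hw : ∀ i ∈ S, 0 < w i ∧ w i ≤ 1)
    {T : ℝ} (hT : 0 ≤ T) : ∃ s, 0 ≤ s ∧ Dfun n S w s = T := by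
  have h0 : Dfun n S w 0 = 0 := Dfun_zero (fun i hi => (hw i hi).1)
  have hub : T ≤ Dfun n S w (T + 1/n) := by
    have := Dfun_ge hS hw (x := T + 1/n) (by positivity)
    linarith
  have hcont : ContinuousOn (Dfun n S w) (Set.Icc 0 (T + 1/n)) := Dfun_cont.continuousOn
  have hmem : T ∈ Set.Icc (Dfun n S w 0) (Dfun n S w (T + 1/n)) := by
    rw [h0]; exact ⟨hT, hub⟩
  obtain ⟨s, hs, hsv⟩ := intermediate_value_Icc (by positivity : (0:ℝ) ≤ T + 1/n) hcont hmem
  exact ⟨s, hs.1, hsv⟩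

lemma structural {n : ℕ} {S : Finset (Fin n)} {w : Fin n → ℝ} (hn : 0 < n)
    (hw : ∀ j ∈ S, 0 < w j ∧ w j ≤ 1)
    (u : Fin n → ℝ) (hu : ∀ j ∈ S, 1/(n:ℝ) ≤ u j)
    (hEF : ∀ j ∈ S, ∀ k ∈ S, w j ≤ w k → w j * u j ≤ w k * u k)
    {s' : ℝ} (hs' : 0 ≤ s')
    (hT : ∑ j ∈ S, (u j - 1/n) = Dfun n S w s') :
    Wfun n S w s' ≤ ∑ j ∈ S, w j * (u j - 1/n) := by
  have hn' : (0:ℝ) < n := by exact_mod_cast hn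
  set a : Fin n → ℝ := fun j => max ((1:ℝ)/n) (s' / w j) with ha
  have hsum0 : ∑ j ∈ S, (u j - a j) = 0 := by
    have e : ∑ j ∈ S, (u j - a j)
        = (∑ j ∈ S, (u j - 1/n)) - ∑ j ∈ S, (a j - 1/n) := by
      rw [← Finset.sum_sub_distrib]
      exact Finset.sum_congr rfl fun j _ => by ring
    rw [e, hT, Dfun]
    exact sub_eq_zero.2 (Finset.sum_congr rfl fun j _ => by simp [ha])
  suffices h : 0 ≤ ∑ j ∈ S, w j * (u j - a j) by
    have expand : ∑ j ∈ S, w j * (u j - a j)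
        = (∑ j ∈ S, w j * (u j - 1/n)) - Wfun n S w s' := by
      rw [Wfun, ← Finset.sum_sub_distrib]
      refine Finset.sum_congr rfl fun j hj => ?_
      have := DW_identity (fun i hi => (hw i hi).1) s' j hj
      rw [← this]; ring
    linarith [expand ▸ h]
  by_cases hB : (S.filter (fun j => u j < a j)).Nonempty
  · obtain ⟨jb, hjbmem, hjbmax⟩ := Finset.exists_max_image _ w hB
    obtain ⟨hjbS, hjblt⟩ := Finset.mem_filter.1 hjbmem
    have hwjb := hw jb hjbS
    have hjbcons : w jb * u jb < s' := by
      have h1 : (1:ℝ)/n ≤ u jb := hu jb hjbS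
      have h2 : u jb < a jb := hjblt
      have h3 : a jb = s' / w jb := by
        rcases max_cases ((1:ℝ)/n) (s' / w jb) with ⟨he, _⟩ | ⟨he, _⟩
        · exfalso; rw [ha] at h2; simp only at h2; rw [he] at h2; linarith
        · rw [ha]; simpa using he
      have : u jb < s' / w jb := by rw [← h3]; exact h2
      calc w jb * u jb < w jb * (s' / w jb) := by
            exact mul_lt_mul_of_pos_left this hwjb.1
        _ = s' := by rw [mul_comm, div_mul_cancel₀ _ hwjb.1.ne']
    have key : ∀ j ∈ S, w jb * (u j - a j) ≤ w j * (u j - a j) := by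
      intro j hj
      rcases le_or_gt (a j) (u j) with hge | hlt
      · rcases eq_or_lt_of_le hge with heq | hgt
        · rw [← heq]; simp
        · have hwle : w jb ≤ w j := by
            by_contra hcon
            push_neg at hcon
            have hEFj := hEF j hj jb hjbS (le_of_lt hcon)
            have haj : s' / w j ≤ a j := le_max_right _ _
            have : s' < w j * u j := by
              have : s' / w j < u j := lt_of_le_of_lt haj hgt
              calc s' = w j * (s' / w j) := by rw [mul_comm, div_mul_cancel₀ _ (hw j hj).1.ne']
                _ < w j * u j := mul_lt_mul_of_pos_left this (hw j hj).1
            linarith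
          nlinarith [sub_nonneg.2 hge]
      · have hwge : w j ≤ w jb := hjbmax j (Finset.mem_filter.2 ⟨hj, hlt⟩)
        nlinarith [sub_neg.2 hlt]
    calc (0:ℝ) = w jb * ∑ j ∈ S, (u j - a j) := by rw [hsum0, mul_zero]
      _ = ∑ j ∈ S, w jb * (u j - a j) := by rw [Finset.mul_sum]
      _ ≤ ∑ j ∈ S, w j * (u j - a j) := Finset.sum_le_sum key
  · refine Finset.sum_nonneg fun j hj => ?_
    have : ¬ u j < a j := by
      intro hcon
      exact hB ⟨j, Finset.mem_filter.2 ⟨hj, hcon⟩⟩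
    have := le_of_not_gt this
    have hwj := (hw j hj).1
    nlinarith

lemma lemmaB {n : ℕ} (hn : 0 < n) (P Q : Finset (Fin n)) (a b : Fin n → ℝ)
    (hP : P.Nonempty) (hQ : Q.Nonempty)
    (ha : ∀ i ∈ P, 0 < a i ∧ a i ≤ 1) (hb : ∀ j ∈ Q, 0 < b j ∧ b j ≤ 1)
    (Rb Ra : ℝ)
    (hRb : Rb = ((Q.card:ℝ) - ∑ j ∈ Q, b j)/n)
    (hRa : Ra = ((P.card:ℝ) - ∑ i ∈ P, a i)/n)
    (t1 t2 : ℝ) (ht1 : 0 ≤ t1) (ht2 : 0 ≤ t2)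
    (hexh : Dfun n P a t1 + Wfun n Q b t2 = Rb)
    (hfeas : Wfun n P a t1 + Dfun n Q b t2 ≤ Ra) :
    ∃ s1 s2 : ℝ, 0 ≤ s1 ∧ s1 ≤ 1/n ∧ 0 ≤ s2 ∧ s2 ≤ 1/n ∧
      Dfun n P a s1 + Wfun n Q b s2 ≤ Rb ∧ Wfun n P a s1 + Dfun n Q b s2 ≤ Ra ∧
      Dfun n P a t1 + Dfun n Q b t2 ≤ Dfun n P a s1 + Dfun n Q b s2 := by
  have hn' : (0:ℝ) < n := by exact_mod_cast hn
  have haP : ∀ i ∈ P, 0 < a i := fun i hi => (ha i hi).1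
  have hbQ : ∀ j ∈ Q, 0 < b j := fun j hj => (hb j hj).1
  have hWQinv : Wfun n Q b (1/n) = Rb := by rw [Wfun_inv hn hb, hRb]
  have ht2n : t2 ≤ 1/n := by
    by_contra hcon
    push_neg at hcon
    have h1 := Wfun_gt hn hQ hb hcon
    have h2 : Wfun n Q b t2 ≤ Rb := by
      have := Dfun_nonneg (n := n) (S := P) (w := a) t1; linarith
    rw [← hRb] at h1; linarith
  rcases le_or_gt t1 (1/n) with ht1n | ht1n
  · exact ⟨t1, t2, ht1, ht1n, ht2, ht2n, le_of_eq hexh, hfeas, le_rfl⟩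
  -- main case : t1 > 1/n
  set J : ℝ → ℝ := fun v => sInf {s : ℝ | 0 ≤ s ∧ v ≤ Dfun n P a s} with hJ
  have Jbdd : ∀ v, BddBelow {s : ℝ | 0 ≤ s ∧ v ≤ Dfun n P a s} :=
    fun v => ⟨0, fun s hs => hs.1⟩
  have Jclosed : ∀ v, IsClosed {s : ℝ | 0 ≤ s ∧ v ≤ Dfun n P a s} := by
    intro v
    exact (isClosed_le continuous_const continuous_id).inter
      (isClosed_le continuous_const Dfun_cont)
  have Jmem : ∀ v, 0 ≤ v → v ≤ Dfun n P a t1 →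
      (0 ≤ J v ∧ v ≤ Dfun n P a (J v)) := by
    intro v hv0 hv1
    exact (Jclosed v).csInf_mem ⟨t1, ht1, hv1⟩ (Jbdd v)
  have Jle : ∀ v, v ≤ Dfun n P a t1 → J v ≤ t1 := by
    intro v hv1
    exact csInf_le (Jbdd v) ⟨ht1, hv1⟩
  have Jval : ∀ v, 0 ≤ v → v ≤ Dfun n P a t1 → Dfun n P a (J v) = v := by
    intro v hv0 hv1
    have hge := (Jmem v hv0 hv1).2
    have hle : Dfun n P a (J v) ≤ v := by
      have h0 : Dfun n P a 0 = 0 := Dfun_zero haP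
      obtain ⟨s, hs, hsv⟩ := intermediate_value_Icc ht1 Dfun_cont.continuousOn
          (by rw [h0]; exact ⟨hv0, hv1⟩)
      have : J v ≤ s := csInf_le (Jbdd v) ⟨hs.1, le_of_eq hsv.symm⟩
      calc Dfun n P a (J v) ≤ Dfun n P a s := Dfun_mono haP this
        _ = v := hsv
    linarith [hge, hle]
  have Jmono : ∀ v v', 0 ≤ v → v ≤ v' → v' ≤ Dfun n P a t1 → J v ≤ J v' := by
    intro v v' hv0 hvv hv1
    refine csInf_le_csInf (Jbdd v) ⟨t1, ht1, hv1⟩ ?_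
    intro s hs
    exact ⟨hs.1, le_trans hvv hs.2⟩
  -- the moving frontier
  set g : ℝ → ℝ := fun s => Wfun n P a (J (Rb - Wfun n Q b s)) + Dfun n Q b s with hg
  have hrange : ∀ s, t2 ≤ s → s ≤ 1/n →
      (0 ≤ Rb - Wfun n Q b s ∧ Rb - Wfun n Q b s ≤ Dfun n P a t1) := by
    intro s hs1 hs2
    constructor
    · have : Wfun n Q b s ≤ Wfun n Q b (1/n) := Wfun_mono hs2
      rw [hWQinv] at this; linarith
    · have : Wfun n Q b t2 ≤ Wfun n Q b s := Wfun_mono hs1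
      linarith [hexh]
  set S₂ : Set ℝ := {s | s ∈ Set.Icc t2 (1/n) ∧ g s ≤ Ra} with hS₂
  have ht2S : t2 ∈ S₂ := by
    refine ⟨⟨le_rfl, ht2n⟩, ?_⟩
    have hv : Rb - Wfun n Q b t2 = Dfun n P a t1 := by linarith [hexh]
    have hJle : J (Rb - Wfun n Q b t2) ≤ t1 := by rw [hv]; exact Jle _ le_rfl
    have : Wfun n P a (J (Rb - Wfun n Q b t2)) ≤ Wfun n P a t1 := Wfun_mono hJle
    simp only [hg]
    linarith [hfeas]
  have hneS : S₂.Nonempty := ⟨t2, ht2S⟩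
  have hbddS : BddAbove S₂ := ⟨1/n, fun s hs => hs.1.2⟩
  set s2 : ℝ := sSup S₂ with hs2def
  have hs2lb : t2 ≤ s2 := le_csSup hbddS ht2S
  have hs2ub : s2 ≤ 1/n := csSup_le hneS (fun s hs => hs.1.2)
  have hanti : ∀ s s', t2 ≤ s → s ≤ s' → s' ≤ 1/n →
      Wfun n P a (J (Rb - Wfun n Q b s')) ≤ Wfun n P a (J (Rb - Wfun n Q b s)) := by
    intro s s' h1 h2 h3
    have hr' := hrange s' (le_trans h1 h2) h3
    have hr := hrange s h1 (le_trans h2 h3)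
    have : Rb - Wfun n Q b s' ≤ Rb - Wfun n Q b s := by
      have := Wfun_mono (n := n) (S := Q) (w := b) h2; linarith
    exact Wfun_mono (Jmono _ _ hr'.1 this hr.2)
  -- s2 ∈ S₂
  have hs2mem : s2 ∈ S₂ := by
    refine ⟨⟨hs2lb, hs2ub⟩, ?_⟩
    have hkey : ∀ s ∈ S₂, Dfun n Q b s ≤ Ra - Wfun n P a (J (Rb - Wfun n Q b s2)) := by
      intro s hs
      have h1 : Wfun n P a (J (Rb - Wfun n Q b s2)) ≤ Wfun n P a (J (Rb - Wfun n Q b s)) :=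
        hanti s s2 hs.1.1 (le_csSup hbddS hs) hs2ub
      have h2 : g s ≤ Ra := hs.2
      simp only [hg] at h2
      linarith
    have hDmono : Monotone (Dfun n Q b) := fun x y h => Dfun_mono hbQ h
    have hsup : Dfun n Q b s2 = sSup (Dfun n Q b '' S₂) :=
      Monotone.map_csSup_of_continuousAt (Dfun_cont.continuousAt) hDmono hneS hbddS
    have : Dfun n Q b s2 ≤ Ra - Wfun n P a (J (Rb - Wfun n Q b s2)) := by
      rw [hsup]
      refine csSup_le (hneS.image _) ?_
      rintro x ⟨s, hs, rfl⟩
      exact hkey s hs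
    simp only [hg]
    linarith
  rcases eq_or_lt_of_le hs2ub with hs2top | hs2top
  · -- endpoint case : s2 = 1/n
    have hJ0 : J 0 = 0 := by
      have h1 : (0:ℝ) ∈ {s : ℝ | 0 ≤ s ∧ (0:ℝ) ≤ Dfun n P a s} := ⟨le_rfl, Dfun_nonneg 0⟩
      have h2 := csInf_le (Jbdd 0) h1
      have h3 := (Jmem 0 le_rfl (Dfun_nonneg t1)).1
      exact le_antisymm h2 h3
    refine ⟨0, 1/n, le_rfl, by positivity, by positivity, le_rfl, ?_, ?_, ?_⟩
    · rw [Dfun_zero haP, hWQinv]; linarith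
    · have hmem := hs2mem.2
      simp only [hg, hs2top] at hmem
      rw [hWQinv, sub_self, hJ0, Wfun_zero haP] at hmem
      rw [Wfun_zero haP]
      linarith
    · have hinc := W_inc_le_D_inc hb ht2n
      rw [Dfun_zero haP]
      linarith [hexh, hinc, hWQinv]
  · -- interior case : s2 < 1/n, double tightness
    set s1 : ℝ := J (Rb - Wfun n Q b s2) with hs1def
    have hr2 := hrange s2 hs2lb hs2ub
    have hs1pos : 0 ≤ s1 := (Jmem _ hr2.1 hr2.2).1
    have hDs1 : Dfun n P a s1 = Rb - Wfun n Q b s2 := Jval _ hr2.1 hr2.2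
    have hgeq : Ra ≤ g s2 := by
      by_contra hc
      push_neg at hc
      set ε := Ra - g s2 with hε
      have hεpos : 0 < ε := by simp [hε]; linarith
      have hcont := (Dfun_cont (n := n) (S := Q) (w := b)).continuousAt (x := s2)
      rw [Metric.continuousAt_iff] at hcont
      obtain ⟨δ, hδpos, hδ⟩ := hcont ε hεpos
      set s := min (1/(n:ℝ)) (s2 + δ/2) with hsdef
      have hss2 : s2 < s := lt_min hs2top (by linarith)
      have hsub : s ≤ 1/n := min_le_left _ _
      have hdist : dist s s2 < δ := by
        rw [Real.dist_eq, abs_of_pos (by linarith)]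
        have : s ≤ s2 + δ/2 := min_le_right _ _
        linarith
      have hDs := hδ hdist
      rw [Real.dist_eq] at hDs
      have hDlt : Dfun n Q b s < Dfun n Q b s2 + ε := by
        have := abs_lt.1 hDs; linarith [this.1, this.2]
      have hsS : s ∈ S₂ := by
        refine ⟨⟨le_trans hs2lb hss2.le, hsub⟩, ?_⟩
        have h1 : Wfun n P a (J (Rb - Wfun n Q b s)) ≤ Wfun n P a (J (Rb - Wfun n Q b s2)) :=
          hanti s2 s hs2lb hss2.le hsub
        have h2 : g s = Wfun n P a (J (Rb - Wfun n Q b s)) + Dfun n Q b s := by simp only [hg]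
        have h3 : g s2 = Wfun n P a (J (Rb - Wfun n Q b s2)) + Dfun n Q b s2 := by simp only [hg]
        have hεeq : ε = Ra - g s2 := hε
        show g s ≤ Ra
        linarith [h1, hDlt, h2, h3, hεeq]
      have := le_csSup hbddS hsS
      linarith
    have hgval : Wfun n P a s1 + Dfun n Q b s2 = Ra := le_antisymm hs2mem.2 hgeq
    have hs1ub : s1 ≤ 1/n := by
      by_contra hc
      push_neg at hc
      have h1 := Wfun_gt hn hP ha hc
      rw [← hRa] at h1
      have h2 : Wfun n P a s1 ≤ Ra := by
        have := Dfun_nonneg (n := n) (S := Q) (w := b) s2; linarith [hgval]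
      linarith
    refine ⟨s1, s2, hs1pos, hs1ub, le_trans ht2 hs2lb, hs2ub, ?_, le_of_eq hgval, ?_⟩
    · rw [hDs1]; linarith
    · have hinc := W_inc_le_D_inc hb hs2lb
      rw [hDs1]
      linarith [hexh, hinc]

section Instance
variable {n : ℕ} {d : Fin n → Fin 2 → ℝ}

lemma memG1 {i : Fin n} : i ∈ G1 d ↔ d i 0 = 1 := by simp [G1]
lemma memG2 {i : Fin n} : i ∈ G2 d ↔ d i 0 < 1 := by simp [G2]

lemma G2_eq (hd : ValidInstance d) : G2 d = Finset.univ.filter (fun i => ¬ d i 0 = 1) := by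
  ext i
  simp only [memG2, Finset.mem_filter, Finset.mem_univ, true_and]
  constructor
  · exact fun h => ne_of_lt h
  · exact fun h => lt_of_le_of_ne (hd.1 i 0).2 h

lemma G2_one (hd : ValidInstance d) {j : Fin n} (hj : j ∈ G2 d) : d j 1 = 1 := by
  obtain ⟨r, hr⟩ := hd.2 j
  fin_cases r
  · exact absurd hr (ne_of_lt (memG2.1 hj))
  · exact hr

lemma sum_split_s6 (hd : ValidInstance d) (f : Fin n → ℝ) :
    ∑ k, f k = ∑ k ∈ G1 d, f k + ∑ k ∈ G2 d, f k := by
  rw [G2_eq hd, G1]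
  exact (Finset.sum_filter_add_sum_filter_not Finset.univ _ f).symm

lemma card_split (hd : ValidInstance d) : (G1 d).card + (G2 d).card = n := by
  classical
  rw [G2_eq hd, G1, Finset.card_filter_add_card_filter_not, Finset.card_univ,
    Fintype.card_fin]

end Instance

section FairWF

lemma fair_waterfill {n : ℕ} (hn : 0 < n) (d : Fin n → Fin 2 → ℝ) (hd : ValidInstance d)
    (s1 s2 : ℝ) (h10 : 0 ≤ s1) (h1n : s1 ≤ 1/n) (h20 : 0 ≤ s2) (h2n : s2 ≤ 1/n)
    (hf1 : ((G1 d).card : ℝ)/n + Dfun n (G1 d) (fun i => d i 1) s1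
         + (∑ j ∈ G2 d, d j 0)/n + Wfun n (G2 d) (fun j => d j 0) s2 ≤ 1)
    (hf2 : (∑ i ∈ G1 d, d i 1)/(n:ℝ) + Wfun n (G1 d) (fun i => d i 1) s1
         + ((G2 d).card : ℝ)/n + Dfun n (G2 d) (fun j => d j 0) s2 ≤ 1) :
    ∃ B : Fin n → Fin 2 → ℝ, Feasible B ∧ SI d B ∧ EF d B ∧
      SW d B = 1 + Dfun n (G1 d) (fun i => d i 1) s1 + Dfun n (G2 d) (fun j => d j 0) s2 := by
  classical
  have hn' : (0:ℝ) < n := by exact_mod_cast hn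
  set β : Fin n → ℝ := fun k =>
    if d k 0 = 1 then max ((1:ℝ)/n) (s1 / d k 1) else max ((1:ℝ)/n) (s2 / d k 0) with hβ
  have hβge : ∀ k, 1/(n:ℝ) ≤ β k := by
    intro k
    by_cases h : d k 0 = 1 <;> simp [hβ, h, le_max_left]
  have hβpos : ∀ k, 0 < β k := fun k => lt_of_lt_of_le (by positivity) (hβge k)
  set B : Fin n → Fin 2 → ℝ := fun k r => β k * d k r with hB
  have hd0 : ∀ k r, 0 < d k r := fun k r => (hd.1 k r).1
  have hd1 : ∀ k r, d k r ≤ 1 := fun k r => (hd.1 k r).2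
  have hBnn : ∀ k r, 0 ≤ B k r := fun k r => by
    have := hd0 k r; have := hβpos k; positivity
  have hutilB : ∀ i k, util (d i) (B k)
      = min (β k * d k 0 / d i 0) (β k * d k 1 / d i 1) := by
    intro i k
    exact util2 (d i) (B k) (hd0 i 0) (hd0 i 1) (hBnn k 0) (hBnn k 1)
  have hutil_self : ∀ k, util (d k) (B k) = β k := by
    intro k
    rw [hutilB k k, mul_div_assoc, div_self (hd0 k 0).ne', mul_div_assoc,
      div_self (hd0 k 1).ne', mul_one, min_self]
  -- EF
  have hEF : EF d B := by
    intro i k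
    rw [hutil_self i, hutilB i k]
    by_cases hi : d i 0 = 1 <;> by_cases hk : d k 0 = 1
    · -- both in G1
      have hβi : β i = max ((1:ℝ)/n) (s1 / d i 1) := by simp [hβ, hi]
      have hβk : β k = max ((1:ℝ)/n) (s1 / d k 1) := by simp [hβ, hk]
      rcases le_or_gt (d k 1) (d i 1) with hcc | hcc
      · refine le_trans (min_le_right _ _) ?_
        rw [hβk]
        have e1 : max ((1:ℝ)/n) (s1 / d k 1) * d k 1 = max (d k 1/n) s1 := by
          rw [mul_comm, max_scale _ _ _ (hd0 k 1), mul_one_div]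
        rw [e1]
        have e2 : β i = max (d i 1/n) s1 / d i 1 := by
          have hms := max_scale (d i 1) s1 ((1:ℝ)/n) (hd0 i 1)
          rw [mul_one_div] at hms
          rw [hβi, eq_div_iff (hd0 i 1).ne', mul_comm]
          exact hms
        rw [e2]
        have hnum : max (d k 1/(n:ℝ)) s1 ≤ max (d i 1/n) s1 :=
          max_le_max (by gcongr) le_rfl
        exact (div_le_div_iff_of_pos_right (hd0 i 1)).2 hnum
      · refine le_trans (min_le_left _ _) ?_
        rw [hi, hk, mul_one, div_one, hβk, hβi]
        have : s1 / d k 1 ≤ s1 / d i 1 :=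
          div_le_div_of_nonneg_left h10 (hd0 i 1) hcc.le
        exact max_le_max le_rfl this
    · -- i ∈ G1, k ∈ G2
      have hβi : β i = max ((1:ℝ)/n) (s1 / d i 1) := by simp [hβ, hi]
      have hβk : β k = max ((1:ℝ)/n) (s2 / d k 0) := by simp [hβ, hk]
      refine le_trans (min_le_left _ _) ?_
      rw [hi, div_one, hβk]
      have e1 : max ((1:ℝ)/n) (s2 / d k 0) * d k 0 = max (d k 0/n) s2 := by
        rw [mul_comm, max_scale _ _ _ (hd0 k 0), mul_one_div]
      rw [e1]
      have h1 : max (d k 0/n) s2 ≤ 1/n := by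
        apply max_le _ h2n
        gcongr
        exact hd1 k 0
      exact le_trans h1 (hβge i)
    · -- i ∈ G2, k ∈ G1
      have hβk : β k = max ((1:ℝ)/n) (s1 / d k 1) := by simp [hβ, hk]
      have hi1 : d i 1 = 1 := G2_one hd (memG2.2 (lt_of_le_of_ne (hd1 i 0) hi))
      refine le_trans (min_le_right _ _) ?_
      rw [hi1, div_one, hβk]
      have e1 : max ((1:ℝ)/n) (s1 / d k 1) * d k 1 = max (d k 1/n) s1 := by
        rw [mul_comm, max_scale _ _ _ (hd0 k 1), mul_one_div]
      rw [e1]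
      have h1 : max (d k 1/n) s1 ≤ 1/n := by
        apply max_le _ h1n
        gcongr
        exact hd1 k 1
      exact le_trans h1 (hβge i)
    · -- both in G2
      have hβi : β i = max ((1:ℝ)/n) (s2 / d i 0) := by simp [hβ, hi]
      have hβk : β k = max ((1:ℝ)/n) (s2 / d k 0) := by simp [hβ, hk]
      rcases le_or_gt (d k 0) (d i 0) with hcc | hcc
      · refine le_trans (min_le_left _ _) ?_
        rw [hβk]
        have e1 : max ((1:ℝ)/n) (s2 / d k 0) * d k 0 = max (d k 0/n) s2 := by
          rw [mul_comm, max_scale _ _ _ (hd0 k 0), mul_one_div]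
        rw [e1]
        have e2 : β i = max (d i 0/n) s2 / d i 0 := by
          have hms := max_scale (d i 0) s2 ((1:ℝ)/n) (hd0 i 0)
          rw [mul_one_div] at hms
          rw [hβi, eq_div_iff (hd0 i 0).ne', mul_comm]
          exact hms
        rw [e2]
        have hnum : max (d k 0/(n:ℝ)) s2 ≤ max (d i 0/n) s2 :=
          max_le_max (by gcongr) le_rfl
        exact (div_le_div_iff_of_pos_right (hd0 i 0)).2 hnum
      · have hk1 : d k 1 = 1 := G2_one hd (memG2.2 (lt_of_le_of_ne (hd1 k 0) hk))
        have hi1 : d i 1 = 1 := G2_one hd (memG2.2 (lt_of_le_of_ne (hd1 i 0) hi))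
        refine le_trans (min_le_right _ _) ?_
        rw [hk1, hi1, mul_one, div_one, hβk, hβi]
        have : s2 / d k 0 ≤ s2 / d i 0 :=
          div_le_div_of_nonneg_left h20 (hd0 i 0) hcc.le
        exact max_le_max le_rfl this
  -- column sums
  have hcol0 : ∑ k, B k 0 = ((G1 d).card : ℝ)/n + Dfun n (G1 d) (fun i => d i 1) s1
      + ((∑ j ∈ G2 d, d j 0)/n + Wfun n (G2 d) (fun j => d j 0) s2) := by
    rw [sum_split_s6 hd]
    congr 1
    · have : ∀ i ∈ G1 d, B i 0 = (max ((1:ℝ)/n) (s1 / d i 1) - 1/n) + 1/n := by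
        intro i hi
        have h1 := memG1.1 hi
        simp [hB, hβ, h1]
      rw [Finset.sum_congr rfl this, Finset.sum_add_distrib, Dfun, Finset.sum_const,
        nsmul_eq_mul, add_comm]
      congr 1
      rw [mul_one_div]
    · have : ∀ j ∈ G2 d, B j 0 = (max (d j 0/n) s2 - d j 0/n) + d j 0/n := by
        intro j hj
        have h1 : ¬ d j 0 = 1 := ne_of_lt (memG2.1 hj)
        simp only [hB, hβ, h1, if_false]
        rw [mul_comm, max_scale _ _ _ (hd0 j 0), mul_one_div]
        ring
      rw [Finset.sum_congr rfl this, Finset.sum_add_distrib, Wfun, ← Finset.sum_div, add_comm]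
  have hcol1 : ∑ k, B k 1 = (∑ i ∈ G1 d, d i 1)/(n:ℝ) + Wfun n (G1 d) (fun i => d i 1) s1
      + (((G2 d).card : ℝ)/n + Dfun n (G2 d) (fun j => d j 0) s2) := by
    rw [sum_split_s6 hd]
    congr 1
    · have : ∀ i ∈ G1 d, B i 1 = (max (d i 1/n) s1 - d i 1/n) + d i 1/n := by
        intro i hi
        have h1 := memG1.1 hi
        simp only [hB, hβ, h1, if_true]
        rw [mul_comm, max_scale _ _ _ (hd0 i 1), mul_one_div]
        ring
      rw [Finset.sum_congr rfl this, Finset.sum_add_distrib, Wfun, ← Finset.sum_div, add_comm]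
    · have : ∀ j ∈ G2 d, B j 1 = (max ((1:ℝ)/n) (s2 / d j 0) - 1/n) + 1/n := by
        intro j hj
        have h1 : ¬ d j 0 = 1 := ne_of_lt (memG2.1 hj)
        have h2 : d j 1 = 1 := G2_one hd hj
        simp [hB, hβ, h1, h2]
      rw [Finset.sum_congr rfl this, Finset.sum_add_distrib, Dfun, Finset.sum_const,
        nsmul_eq_mul, add_comm]
      congr 1
      rw [mul_one_div]
  refine ⟨B, ⟨hBnn, ?_⟩, ?_, hEF, ?_⟩
  · intro r
    fin_cases r
    · show ∑ i : Fin n, B i 0 ≤ 1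
      rw [hcol0]; linarith
    · show ∑ i : Fin n, B i 1 ≤ 1
      rw [hcol1]; linarith
  · intro k
    rw [hutil_self k]
    exact hβge k
  · rw [SW]
    have : ∀ k ∈ Finset.univ, util (d k) (B k) = β k := fun k _ => hutil_self k
    rw [Finset.sum_congr rfl this, sum_split_s6 hd (f := β)]
    have e1 : ∑ i ∈ G1 d, β i = ((G1 d).card : ℝ)/n + Dfun n (G1 d) (fun i => d i 1) s1 := by
      have : ∀ i ∈ G1 d, β i = (max ((1:ℝ)/n) (s1 / d i 1) - 1/n) + 1/n := by
        intro i hi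
        simp [hβ, memG1.1 hi]
      rw [Finset.sum_congr rfl this, Finset.sum_add_distrib, Dfun, Finset.sum_const,
        nsmul_eq_mul, add_comm]
      congr 1
      rw [mul_one_div]
    have e2 : ∑ j ∈ G2 d, β j = ((G2 d).card : ℝ)/n + Dfun n (G2 d) (fun j => d j 0) s2 := by
      have : ∀ j ∈ G2 d, β j = (max ((1:ℝ)/n) (s2 / d j 0) - 1/n) + 1/n := by
        intro j hj
        simp [hβ, ne_of_lt (memG2.1 hj)]
      rw [Finset.sum_congr rfl this, Finset.sum_add_distrib, Dfun, Finset.sum_const,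
        nsmul_eq_mul, add_comm]
      congr 1
      rw [mul_one_div]
    rw [e1, e2]
    have hc := card_split hd
    have : ((G1 d).card : ℝ) + ((G2 d).card : ℝ) = n := by exact_mod_cast hc
    field_simp
    linarith [this]
end FairWF

lemma core {n : ℕ} (hn : 0 < n) (P Q : Finset (Fin n)) (a b : Fin n → ℝ)
    (hP : P.Nonempty) (hQ : Q.Nonempty)
    (ha : ∀ i ∈ P, 0 < a i ∧ a i ≤ 1) (hb : ∀ j ∈ Q, 0 < b j ∧ b j ≤ 1)
    (Rb Ra : ℝ)
    (hRb : Rb = ((Q.card:ℝ) - ∑ j ∈ Q, b j)/n)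
    (hRa : Ra = ((P.card:ℝ) - ∑ i ∈ P, a i)/n)
    (t1 t2 : ℝ) (ht1 : 0 ≤ t1) (ht2 : 0 ≤ t2)
    (hexh : Dfun n P a t1 + Wfun n Q b t2 = Rb)
    (hfeasA : Wfun n P a t1 + Dfun n Q b t2 ≤ Ra)
    (u : Fin n → ℝ) (hu : ∀ k, 1/(n:ℝ) ≤ u k)
    (hufeas : (∑ i ∈ P, (u i - 1/n)) + ∑ j ∈ Q, b j * (u j - 1/n) ≤ Rb)
    (hEFq : ∀ j ∈ Q, ∀ k ∈ Q, b j ≤ b k → b j * u j ≤ b k * u k)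
    (hval : ∀ s1 s2 : ℝ, 0 ≤ s1 → s1 ≤ 1/n → 0 ≤ s2 → s2 ≤ 1/n →
      Dfun n P a s1 + Wfun n Q b s2 ≤ Rb → Wfun n P a s1 + Dfun n Q b s2 ≤ Ra →
      Dfun n P a s1 + Dfun n Q b s2 ≤ (∑ i ∈ P, (u i - 1/n)) + ∑ j ∈ Q, (u j - 1/n)) :
    Wfun n Q b t2 ≤ ∑ j ∈ Q, b j * (u j - 1/n) := by
  have hn' : (0:ℝ) < n := by exact_mod_cast hn
  have hbQ : ∀ j ∈ Q, 0 < b j := fun j hj => (hb j hj).1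
  have ht2n : t2 ≤ 1/n := by
    by_contra hcon
    push_neg at hcon
    have h1 := Wfun_gt hn hQ hb hcon
    have h2 : Wfun n Q b t2 ≤ Rb := by
      have := Dfun_nonneg (n := n) (S := P) (w := a) t1; linarith
    rw [← hRb] at h1; linarith
  by_contra hσ
  push_neg at hσ
  set σ := ∑ j ∈ Q, b j * (u j - 1/(n:ℝ)) with hσdef
  set T := ∑ j ∈ Q, (u j - 1/(n:ℝ)) with hTdef
  have hT0 : 0 ≤ T := Finset.sum_nonneg fun j _ => by linarith [hu j]
  obtain ⟨s', hs'0, hs'⟩ := exists_level hQ hb hT0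
  have hstruct : Wfun n Q b s' ≤ σ :=
    structural hn hb u (fun j _ => hu j) hEFq hs'0 hs'.symm
  obtain ⟨s1, s2, hb1, hb2, hb3, hb4, hfe1, hfe2, hvalue⟩ :=
    lemmaB hn P Q a b hP hQ ha hb Rb Ra hRb hRa t1 t2 ht1 ht2 hexh hfeasA
  have hv := hval s1 s2 hb1 hb2 hb3 hb4 hfe1 hfe2
  set X := ∑ i ∈ P, (u i - 1/(n:ℝ)) with hXdef
  have c1 : Dfun n P a t1 + Dfun n Q b t2 ≤ X + T := le_trans hvalue hv
  have c2 : X ≤ Rb - σ := by rw [hσdef]; linarith [hufeas]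
  have hdagger : Dfun n Q b t2 - Dfun n Q b s' ≤ Wfun n Q b t2 - Wfun n Q b s' := by
    have e1 : T = Dfun n Q b s' := hs'.symm
    have : X ≤ Dfun n P a t1 + Wfun n Q b t2 - Wfun n Q b s' := by
      calc X ≤ Rb - σ := c2
        _ ≤ Rb - Wfun n Q b s' := by linarith [hstruct]
        _ = Dfun n P a t1 + Wfun n Q b t2 - Wfun n Q b s' := by rw [← hexh]
    linarith [c1, e1]
  have hs't2 : s' ≤ t2 := by
    by_contra hcon
    push_neg at hcon
    have := Wfun_mono (n := n) (S := Q) (w := b) hcon.le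
    linarith [hstruct, hσ]
  -- per-term analysis
  have hterm_nonneg : ∀ j ∈ Q, 0 ≤ (max (b j/(n:ℝ)) t2 - b j/n) - (max (b j/n) s' - b j/n) := by
    intro j hj
    have : max (b j/(n:ℝ)) s' ≤ max (b j/n) t2 := max_le_max le_rfl hs't2
    linarith
  have hWgap_pos : 0 < Wfun n Q b t2 - Wfun n Q b s' := by linarith [hstruct, hσ]
  have hDgap : Dfun n Q b t2 - Dfun n Q b s'
      = ∑ j ∈ Q, ((max ((1:ℝ)/n) (t2 / b j) - 1/n) - (max ((1:ℝ)/n) (s' / b j) - 1/n)) := by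
    rw [Dfun, Dfun, ← Finset.sum_sub_distrib]
  have hWgap : Wfun n Q b t2 - Wfun n Q b s'
      = ∑ j ∈ Q, ((max (b j/(n:ℝ)) t2 - b j/n) - (max (b j/n) s' - b j/n)) := by
    rw [Wfun, Wfun, ← Finset.sum_sub_distrib]
  have hterm_id : ∀ j ∈ Q,
      (max (b j/(n:ℝ)) t2 - b j/n) - (max (b j/n) s' - b j/n)
      = b j * ((max ((1:ℝ)/n) (t2 / b j) - 1/n) - (max ((1:ℝ)/n) (s' / b j) - 1/n)) := by
    intro j hj
    have h := hbQ j hj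
    have e1 : b j * max ((1:ℝ)/n) (t2 / b j) = max (b j/n) t2 := by
      rw [mul_max_of_nonneg _ _ h.le, mul_div_cancel₀ _ h.ne', mul_one_div]
    have e2 : b j * max ((1:ℝ)/n) (s' / b j) = max (b j/n) s' := by
      rw [mul_max_of_nonneg _ _ h.le, mul_div_cancel₀ _ h.ne', mul_one_div]
    linarith [e1, e2]
  have hall_zero : ∀ j ∈ Q,
      ((max ((1:ℝ)/n) (t2 / b j) - 1/n) - (max ((1:ℝ)/n) (s' / b j) - 1/n))
      - ((max (b j/(n:ℝ)) t2 - b j/n) - (max (b j/n) s' - b j/n)) = 0 := by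
    have hsum : ∑ j ∈ Q, (((max ((1:ℝ)/n) (t2 / b j) - 1/n) - (max ((1:ℝ)/n) (s' / b j) - 1/n))
        - ((max (b j/(n:ℝ)) t2 - b j/n) - (max (b j/n) s' - b j/n))) ≤ 0 := by
      rw [Finset.sum_sub_distrib, ← hDgap, ← hWgap]
      linarith [hdagger]
    have hnn : ∀ j ∈ Q, 0 ≤ ((max ((1:ℝ)/n) (t2 / b j) - 1/n) - (max ((1:ℝ)/n) (s' / b j) - 1/n))
        - ((max (b j/(n:ℝ)) t2 - b j/n) - (max (b j/n) s' - b j/n)) := by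
      intro j hj
      rw [hterm_id j hj]
      have hDj : 0 ≤ (max ((1:ℝ)/n) (t2 / b j) - 1/n) - (max ((1:ℝ)/n) (s' / b j) - 1/n) := by
        have h := hbQ j hj
        have : s' / b j ≤ t2 / b j := by gcongr
        have : max ((1:ℝ)/n) (s' / b j) ≤ max ((1:ℝ)/n) (t2 / b j) := max_le_max le_rfl this
        linarith
      nlinarith [(hb j hj).2, hDj]
    have := (Finset.sum_eq_zero_iff_of_nonneg hnn).1 (le_antisymm hsum (Finset.sum_nonneg hnn))
    exact this
  obtain ⟨j0, hj0Q, hj0orig⟩ : ∃ j0 ∈ Q,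
      0 < (max (b j0/(n:ℝ)) t2 - b j0/n) - (max (b j0/n) s' - b j0/n) := by
    by_contra hcon
    push_neg at hcon
    have : Wfun n Q b t2 - Wfun n Q b s' ≤ 0 := by
      rw [hWgap]
      exact Finset.sum_nonpos fun j hj => hcon j hj
    linarith
  have hDj0 : 0 < (max ((1:ℝ)/n) (t2 / b j0) - 1/n) - (max ((1:ℝ)/n) (s' / b j0) - 1/n) := by
    have hid := hterm_id j0 hj0Q
    have hj0' := hj0orig
    rw [hid] at hj0'
    rcases mul_pos_iff.1 hj0' with ⟨_, h⟩ | ⟨h, _⟩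
    · exact h
    · linarith [hbQ j0 hj0Q]
  have hbj0 : b j0 = 1 := by
    have hz := hall_zero j0 hj0Q
    rw [hterm_id j0 hj0Q] at hz
    have : (1 - b j0) * ((max ((1:ℝ)/n) (t2 / b j0) - 1/n) - (max ((1:ℝ)/n) (s' / b j0) - 1/n))
        = 0 := by linarith [hz]
    rcases mul_eq_zero.1 this with h | h
    · linarith
    · linarith
  -- contradiction : with b j0 = 1 and t2 ≤ 1/n the term vanishes
  have : max (b j0/(n:ℝ)) t2 = b j0/n := by
    rw [hbj0]
    exact max_eq_left (by rw [one_div] at ht2n ⊢; simpa using ht2n)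
  have h2 : b j0/(n:ℝ) ≤ max (b j0/n) s' := le_max_left _ _
  linarith [hj0orig, this, h2]

end Aux

/-- For the F2 allocation `A` (with positive residuals) and a social-welfare
maximizing fair allocation `A*`: if resource `k` is fully allocated in `A`,
then `ΔS_k(A) ≥ ΔS*_k`. -/
theorem f2_exhausted_side (n : ℕ) (hn : 0 < n) (d : Fin n → Fin 2 → ℝ)
    (hd : ValidInstance d) (hG1 : n ≤ 2 * (G1 d).card) (hG2 : 1 ≤ (G2 d).card)
    (hR1 : 0 < R1 d) (hR2 : 0 < R2 d)
    (A : Fin n → Fin 2 → ℝ) (hA : IsF2Alloc d A)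
    (Astar : Fin n → Fin 2 → ℝ)
    (hfeas : Feasible Astar) (hSI : SI d Astar) (hEF : EF d Astar)
    (hmax : ∀ B : Fin n → Fin 2 → ℝ, Feasible B → SI d B → EF d B →
      SW d B ≤ SW d Astar) :
    ((∑ i, A i 0) = 1 → dS1 d Astar ≤ dS1 d A) ∧
    ((∑ i, A i 1) = 1 → dS2 d Astar ≤ dS2 d A) := by
  classical
  obtain ⟨t1, t2, ht1, ht2, hW, _hcoup, hAfeas, _hr⟩ := hA
  have hn' : (0:ℝ) < n := by exact_mod_cast hn
  have hd0 : ∀ k r, 0 < d k r := fun k r => (hd.1 k r).1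
  have hd1 : ∀ k r, d k r ≤ 1 := fun k r => (hd.1 k r).2
  have haG1 : ∀ i ∈ G1 d, 0 < d i 1 ∧ d i 1 ≤ 1 := fun i _ => hd.1 i 1
  have hbG2 : ∀ j ∈ G2 d, 0 < d j 0 ∧ d j 0 ≤ 1 := fun j _ => hd.1 j 0
  have hG1ne : (G1 d).Nonempty := by
    rw [← Finset.card_pos]; omega
  have hG2ne : (G2 d).Nonempty := by
    rw [← Finset.card_pos]; omega
  have hcards : ((G1 d).card : ℝ) + ((G2 d).card : ℝ) = n := by
    exact_mod_cast card_split hd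
  -- helper identity
  have max_div_helper : ∀ (c t : ℝ), 0 < c → max (c/(n:ℝ)) t / c = max ((1:ℝ)/n) (t / c) := by
    intro c t hc
    rw [eq_comm, eq_div_iff hc.ne', mul_comm, max_scale _ _ _ hc, mul_one_div]
  -- A entries
  have hA_G1_0 : ∀ i ∈ G1 d, A i 0 = max ((1:ℝ)/n) (t1 / d i 1) := by
    intro i hi
    obtain ⟨h1, h2⟩ := (hW i).1 (memG1.1 hi)
    rw [h2, h1, max_div_helper _ _ (hd0 i 1)]
  have hA_G1_1 : ∀ i ∈ G1 d, A i 1 = max (d i 1/(n:ℝ)) t1 := by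
    intro i hi
    exact ((hW i).1 (memG1.1 hi)).1
  have hA_G2_0 : ∀ j ∈ G2 d, A j 0 = max (d j 0/(n:ℝ)) t2 := by
    intro j hj
    exact ((hW j).2 (memG2.1 hj)).1
  have hA_G2_1 : ∀ j ∈ G2 d, A j 1 = max ((1:ℝ)/n) (t2 / d j 0) := by
    intro j hj
    obtain ⟨h1, h2⟩ := (hW j).2 (memG2.1 hj)
    rw [h2, h1, max_div_helper _ _ (hd0 j 0)]
  -- sums
  have hsum0 : ∑ k, A k 0 = (((G1 d).card : ℝ)/n + Dfun n (G1 d) (fun i => d i 1) t1)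
      + ((∑ j ∈ G2 d, d j 0)/n + Wfun n (G2 d) (fun j => d j 0) t2) := by
    rw [sum_split_s6 hd]
    congr 1
    · have e : ∀ i ∈ G1 d, A i 0 = (max ((1:ℝ)/n) (t1 / d i 1) - 1/n) + 1/n := by
        intro i hi; rw [hA_G1_0 i hi]; ring
      rw [Finset.sum_congr rfl e, Finset.sum_add_distrib, Dfun, Finset.sum_const,
        nsmul_eq_mul, add_comm, mul_one_div]
    · have e : ∀ j ∈ G2 d, A j 0 = (max (d j 0/(n:ℝ)) t2 - d j 0/n) + d j 0/n := by
        intro j hj; rw [hA_G2_0 j hj]; ring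
      rw [Finset.sum_congr rfl e, Finset.sum_add_distrib, Wfun, ← Finset.sum_div, add_comm]
  have hsum1 : ∑ k, A k 1 = ((∑ i ∈ G1 d, d i 1)/(n:ℝ) + Wfun n (G1 d) (fun i => d i 1) t1)
      + (((G2 d).card : ℝ)/n + Dfun n (G2 d) (fun j => d j 0) t2) := by
    rw [sum_split_s6 hd]
    congr 1
    · have e : ∀ i ∈ G1 d, A i 1 = (max (d i 1/(n:ℝ)) t1 - d i 1/n) + d i 1/n := by
        intro i hi; rw [hA_G1_1 i hi]; ring
      rw [Finset.sum_congr rfl e, Finset.sum_add_distrib, Wfun, ← Finset.sum_div, add_comm]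
    · have e : ∀ j ∈ G2 d, A j 1 = (max ((1:ℝ)/n) (t2 / d j 0) - 1/n) + 1/n := by
        intro j hj; rw [hA_G2_1 j hj]; ring
      rw [Finset.sum_congr rfl e, Finset.sum_add_distrib, Dfun, Finset.sum_const,
        nsmul_eq_mul, add_comm, mul_one_div]
  have hdS1A : dS1 d A = Dfun n (G1 d) (fun i => d i 1) t1 := by
    rw [dS1]
    have e : ∀ i ∈ G1 d, A i 0 = (max ((1:ℝ)/n) (t1 / d i 1) - 1/n) + 1/n := by
      intro i hi; rw [hA_G1_0 i hi]; ring
    rw [Finset.sum_congr rfl e, Finset.sum_add_distrib, Dfun, Finset.sum_const,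
      nsmul_eq_mul, mul_one_div]
    ring
  have hdS2A : dS2 d A = Dfun n (G2 d) (fun j => d j 0) t2 := by
    rw [dS2]
    have e : ∀ j ∈ G2 d, A j 1 = (max ((1:ℝ)/n) (t2 / d j 0) - 1/n) + 1/n := by
      intro j hj; rw [hA_G2_1 j hj]; ring
    rw [Finset.sum_congr rfl e, Finset.sum_add_distrib, Dfun, Finset.sum_const,
      nsmul_eq_mul, mul_one_div]
    ring
  -- R identities
  have hR1eq : R1 d = (((G2 d).card : ℝ) - ∑ j ∈ G2 d, d j 0)/n := by
    rw [R1]; field_simp; linarith [hcards]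
  have hR2eq : R2 d = (((G1 d).card : ℝ) - ∑ i ∈ G1 d, d i 1)/n := by
    rw [R2]; field_simp; linarith [hcards]
  -- profile of Astar
  set u : Fin n → ℝ := fun k => util (d k) (Astar k) with hu_def
  have hu_eq : ∀ k, u k = min (Astar k 0 / d k 0) (Astar k 1 / d k 1) := by
    intro k
    exact util2 (d k) (Astar k) (hd0 k 0) (hd0 k 1) (hfeas.1 k 0) (hfeas.1 k 1)
  have F1 : ∀ k, 1/(n:ℝ) ≤ u k := fun k => by
    have := hSI k; rw [hu_def]; exact this
  have F2 : ∀ k r, u k * d k r ≤ Astar k r := by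
    intro k r
    have h := hu_eq k
    fin_cases r
    · have : u k ≤ Astar k 0 / d k 0 := h ▸ min_le_left _ _
      calc u k * d k 0 ≤ (Astar k 0 / d k 0) * d k 0 :=
            mul_le_mul_of_nonneg_right this (hd0 k 0).le
        _ = Astar k 0 := div_mul_cancel₀ _ (hd0 k 0).ne'
    · have : u k ≤ Astar k 1 / d k 1 := h ▸ min_le_right _ _
      calc u k * d k 1 ≤ (Astar k 1 / d k 1) * d k 1 :=
            mul_le_mul_of_nonneg_right this (hd0 k 1).le
        _ = Astar k 1 := div_mul_cancel₀ _ (hd0 k 1).ne'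
  have hu_nonneg : ∀ k, 0 ≤ u k := fun k => le_trans (by positivity) (F1 k)
  -- EF-monotonicity within G2 (weights d · 0)
  have F3G2 : ∀ j ∈ G2 d, ∀ k ∈ G2 d, d j 0 ≤ d k 0 → d j 0 * u j ≤ d k 0 * u k := by
    intro j hj k hk hjk
    have hEFkj := hEF k j
    have hlow : u j * d j 0 / d k 0 ≤ util (d k) (Astar j) := by
      rw [util2 (d k) (Astar j) (hd0 k 0) (hd0 k 1) (hfeas.1 j 0) (hfeas.1 j 1)]
      refine le_min ?_ ?_
      · exact (div_le_div_iff_of_pos_right (hd0 k 0)).2 (F2 j 0)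
      · rw [G2_one hd hk, div_one]
        have h1 : u j * d j 0 / d k 0 ≤ u j := by
          rw [div_le_iff₀ (hd0 k 0)]
          nlinarith [hu_nonneg j, hjk]
        have h2 : u j = u j * d j 1 := by rw [G2_one hd hj, mul_one]
        calc u j * d j 0 / d k 0 ≤ u j := h1
          _ = u j * d j 1 := h2
          _ ≤ Astar j 1 := F2 j 1
    have : u j * d j 0 / d k 0 ≤ u k := le_trans hlow hEFkj
    rw [div_le_iff₀ (hd0 k 0)] at this
    nlinarith [this]
  -- EF-monotonicity within G1 (weights d · 1)
  have F3G1 : ∀ i ∈ G1 d, ∀ k ∈ G1 d, d i 1 ≤ d k 1 → d i 1 * u i ≤ d k 1 * u k := by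
    intro i hi k hk hik
    have hEFki := hEF k i
    have hlow : u i * d i 1 / d k 1 ≤ util (d k) (Astar i) := by
      rw [util2 (d k) (Astar i) (hd0 k 0) (hd0 k 1) (hfeas.1 i 0) (hfeas.1 i 1)]
      refine le_min ?_ ?_
      · rw [memG1.1 hk, div_one]
        have h1 : u i * d i 1 / d k 1 ≤ u i := by
          rw [div_le_iff₀ (hd0 k 1)]
          nlinarith [hu_nonneg i, hik]
        have h2 : u i = u i * d i 0 := by rw [memG1.1 hi, mul_one]
        calc u i * d i 1 / d k 1 ≤ u i := h1
          _ = u i * d i 0 := h2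
          _ ≤ Astar i 0 := F2 i 0
      · exact (div_le_div_iff_of_pos_right (hd0 k 1)).2 (F2 i 1)
    have : u i * d i 1 / d k 1 ≤ u k := le_trans hlow hEFki
    rw [div_le_iff₀ (hd0 k 1)] at this
    nlinarith [this]
  -- feasibility of the profile
  set X := ∑ i ∈ G1 d, (u i - 1/(n:ℝ)) with hX
  set T := ∑ j ∈ G2 d, (u j - 1/(n:ℝ)) with hT
  set σ := ∑ j ∈ G2 d, d j 0 * (u j - 1/(n:ℝ)) with hσ
  set ρ := ∑ i ∈ G1 d, d i 1 * (u i - 1/(n:ℝ)) with hρ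
  have hXsum : X = (∑ i ∈ G1 d, u i) - ((G1 d).card : ℝ)/n := by
    rw [hX, Finset.sum_sub_distrib, Finset.sum_const, nsmul_eq_mul, mul_one_div]
  have hTsum : T = (∑ j ∈ G2 d, u j) - ((G2 d).card : ℝ)/n := by
    rw [hT, Finset.sum_sub_distrib, Finset.sum_const, nsmul_eq_mul, mul_one_div]
  have hσsum : σ = (∑ j ∈ G2 d, d j 0 * u j) - (∑ j ∈ G2 d, d j 0)/n := by
    have e : ∀ j ∈ G2 d, d j 0 * (u j - 1/(n:ℝ)) = d j 0 * u j - d j 0/n := fun j _ => by ring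
    rw [hσ, Finset.sum_congr rfl e, Finset.sum_sub_distrib, Finset.sum_div]
  have hρsum : ρ = (∑ i ∈ G1 d, d i 1 * u i) - (∑ i ∈ G1 d, d i 1)/n := by
    have e : ∀ i ∈ G1 d, d i 1 * (u i - 1/(n:ℝ)) = d i 1 * u i - d i 1/n := fun i _ => by ring
    rw [hρ, Finset.sum_congr rfl e, Finset.sum_sub_distrib, Finset.sum_div]
  have hfeas0 : (∑ i ∈ G1 d, u i) + ∑ j ∈ G2 d, d j 0 * u j ≤ 1 := by
    have h := hfeas.2 0
    rw [sum_split_s6 hd (f := fun k => Astar k 0)] at h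
    have h1 : ∑ i ∈ G1 d, u i ≤ ∑ i ∈ G1 d, Astar i 0 := by
      refine Finset.sum_le_sum fun i hi => ?_
      have := F2 i 0
      rw [memG1.1 hi, mul_one] at this
      exact this
    have h2 : ∑ j ∈ G2 d, d j 0 * u j ≤ ∑ j ∈ G2 d, Astar j 0 := by
      refine Finset.sum_le_sum fun j hj => ?_
      have := F2 j 0
      linarith [this]
    linarith
  have hfeas1 : (∑ i ∈ G1 d, d i 1 * u i) + ∑ j ∈ G2 d, u j ≤ 1 := by
    have h := hfeas.2 1
    rw [sum_split_s6 hd (f := fun k => Astar k 1)] at h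
    have h1 : ∑ i ∈ G1 d, d i 1 * u i ≤ ∑ i ∈ G1 d, Astar i 1 := by
      refine Finset.sum_le_sum fun i hi => ?_
      have := F2 i 1
      linarith [this]
    have h2 : ∑ j ∈ G2 d, u j ≤ ∑ j ∈ G2 d, Astar j 1 := by
      refine Finset.sum_le_sum fun j hj => ?_
      have := F2 j 1
      rw [G2_one hd hj, mul_one] at this
      exact this
    linarith
  have hufeas1 : X + σ ≤ R1 d := by
    rw [hXsum, hσsum, R1]
    linarith [hfeas0]
  have hufeas2 : T + ρ ≤ R2 d := by
    rw [hTsum, hρsum, R2]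
    linarith [hfeas1]
  -- value comparisons from hmax
  have hSWAstar : SW d Astar = 1 + X + T := by
    rw [SW, sum_split_s6 hd (f := fun k => util (d k) (Astar k))]
    have e1 : ∑ i ∈ G1 d, util (d i) (Astar i) = ∑ i ∈ G1 d, u i := rfl
    have e2 : ∑ j ∈ G2 d, util (d j) (Astar j) = ∑ j ∈ G2 d, u j := rfl
    rw [e1, e2, hXsum, hTsum]
    have : ((G1 d).card : ℝ)/n + ((G2 d).card : ℝ)/n = 1 := by
      field_simp
      linarith [hcards]
    linarith [this]
  have hval12 : ∀ s1 s2 : ℝ, 0 ≤ s1 → s1 ≤ 1/(n:ℝ) → 0 ≤ s2 → s2 ≤ 1/(n:ℝ) →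
      Dfun n (G1 d) (fun i => d i 1) s1 + Wfun n (G2 d) (fun j => d j 0) s2 ≤ R1 d →
      Wfun n (G1 d) (fun i => d i 1) s1 + Dfun n (G2 d) (fun j => d j 0) s2 ≤ R2 d →
      Dfun n (G1 d) (fun i => d i 1) s1 + Dfun n (G2 d) (fun j => d j 0) s2 ≤ X + T := by
    intro s1 s2 h1 h2 h3 h4 hc1 hc2
    obtain ⟨B, hBfeas, hBSI, hBEF, hBSW⟩ := fair_waterfill hn d hd s1 s2 h1 h2 h3 h4
      (by rw [R1] at hc1; linarith) (by rw [R2] at hc2; linarith)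
    have := hmax B hBfeas hBSI hBEF
    rw [hBSW, hSWAstar] at this
    linarith
  constructor
  · -- resource 1 exhausted
    intro hexh0
    rw [hsum0] at hexh0
    have hexhD : Dfun n (G1 d) (fun i => d i 1) t1 + Wfun n (G2 d) (fun j => d j 0) t2
        = R1 d := by rw [R1]; linarith [hexh0]
    have hfeasD : Wfun n (G1 d) (fun i => d i 1) t1 + Dfun n (G2 d) (fun j => d j 0) t2
        ≤ R2 d := by
      have h := hAfeas.2 1
      rw [hsum1] at h
      rw [R2]; linarith
    have hcore := core hn (G1 d) (G2 d) (fun i => d i 1) (fun j => d j 0)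
      hG1ne hG2ne haG1 hbG2 (R1 d) (R2 d) hR1eq hR2eq t1 t2 ht1 ht2 hexhD hfeasD
      u F1 (by rw [← hX, ← hσ]; exact hufeas1)
      (fun j hj k hk h => F3G2 j hj k hk h)
      (fun s1 s2 h1 h2 h3 h4 hc1 hc2 => by
        rw [← hX, ← hT]
        exact hval12 s1 s2 h1 h2 h3 h4 hc1 hc2)
    -- bound dS1 Astar
    have hbound : dS1 d Astar ≤ R1 d - σ := by
      rw [dS1]
      have h := hfeas.2 0
      rw [sum_split_s6 hd (f := fun k => Astar k 0)] at h
      have h2 : ∑ j ∈ G2 d, d j 0 * u j ≤ ∑ j ∈ G2 d, Astar j 0 :=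
        Finset.sum_le_sum fun j hj => by linarith [F2 j 0]
      rw [hσsum, R1]
      linarith
    have : σ ≥ Wfun n (G2 d) (fun j => d j 0) t2 := by
      rw [hσ]
      exact hcore
    rw [hdS1A]
    linarith [hbound, hexhD, this]
  · -- resource 2 exhausted
    intro hexh1
    rw [hsum1] at hexh1
    have hexhD : Dfun n (G2 d) (fun j => d j 0) t2 + Wfun n (G1 d) (fun i => d i 1) t1
        = R2 d := by rw [R2]; linarith [hexh1]
    have hfeasD : Wfun n (G2 d) (fun j => d j 0) t2 + Dfun n (G1 d) (fun i => d i 1) t1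
        ≤ R1 d := by
      have h := hAfeas.2 0
      rw [hsum0] at h
      rw [R1]; linarith
    have hcore := core hn (G2 d) (G1 d) (fun j => d j 0) (fun i => d i 1)
      hG2ne hG1ne hbG2 haG1 (R2 d) (R1 d) hR2eq hR1eq t2 t1 ht2 ht1 hexhD hfeasD
      u F1 (by rw [← hT, ← hρ]; exact hufeas2)
      (fun i hi k hk h => F3G1 i hi k hk h)
      (fun s1 s2 h1 h2 h3 h4 hc1 hc2 => by
        rw [← hT, ← hX]
        have := hval12 s2 s1 h3 h4 h1 h2 (by linarith [hc2]) (by linarith [hc1])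
        linarith)
    have hbound : dS2 d Astar ≤ R2 d - ρ := by
      rw [dS2]
      have h := hfeas.2 1
      rw [sum_split_s6 hd (f := fun k => Astar k 1)] at h
      have h2 : ∑ i ∈ G1 d, d i 1 * u i ≤ ∑ i ∈ G1 d, Astar i 1 :=
        Finset.sum_le_sum fun i hi => by linarith [F2 i 1]
      rw [hρsum, R2]
      linarith
    have : ρ ≥ Wfun n (G1 d) (fun i => d i 1) t1 := by
      rw [hρ]
      exact hcore
    rw [hdS2A]
    linarith [hbound, hexhD, this]
end
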